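/- arXiv:2201.02776 — 2 statements merged into one kernel-verified Lean document; each statement's English description precedes it below -/
import Mathlib

section
/- Let n ≥ 2 and let NF_n be the n-dimensional complex Leibniz algebra with basis e_1, …, e_n and nonzero products [e_i, e_1] = e_{i+1} for 1 ≤ i ≤ n−1 (all other basis products zero). Let R be an (n+1)-dimensional complex solvable Leibniz algebra whose nilradical is isomorphic to NF_n. Then R admits a basis {e_1, …, e_n, x} such that the nonzero products are exactly [e_i, e_1] = e_{i+1} for 1 ≤ i ≤ n−1, [x, e_1] = e_1, and [e_i, x] = −i·e_i for 1 ≤ i ≤ n. -/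
open Module Submodule

universe u v w

/-- A bilinear bracket on `L`. -/
abbrev Bil (L : Type u) [AddCommGroup L] [Module ℂ L] : Type u := L →ₗ[ℂ] L →ₗ[ℂ] L

variable {L : Type u} [AddCommGroup L] [Module ℂ L]

/-- The (right) Leibniz identity. -/
def IsLeibniz (br : Bil L) : Prop :=
  ∀ x y z : L, br (br x y) z = br (br x z) y + br x (br y z)

/-- The span of all brackets `[S, T]`. -/
def bspan (br : Bil L) (S T : Submodule ℂ L) : Submodule ℂ L :=
  Submodule.span ℂ {z : L | ∃ x ∈ S, ∃ y ∈ T, z = br x y}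

/-- `I` is a (two-sided) ideal of the subalgebra `S`. -/
def IsIdealIn (br : Bil L) (S I : Submodule ℂ L) : Prop :=
  I ≤ S ∧ ∀ x ∈ I, ∀ y ∈ S, br x y ∈ I ∧ br y x ∈ I

/-- `I` is a (two-sided) ideal of the whole algebra. -/
abbrev IsIdeal (br : Bil L) (I : Submodule ℂ L) : Prop := IsIdealIn br ⊤ I

/-- Lower central series of the subalgebra `S`. -/
def lcs (br : Bil L) (S : Submodule ℂ L) : ℕ → Submodule ℂ L
  | 0 => S
  | n + 1 => bspan br (lcs br S n) S

/-- The subalgebra `S` is nilpotent. -/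
def IsNilpotentSub (br : Bil L) (S : Submodule ℂ L) : Prop :=
  ∃ n, lcs br S n = ⊥

/-- Derived series of the subalgebra `S`. -/
def derS (br : Bil L) (S : Submodule ℂ L) : ℕ → Submodule ℂ L
  | 0 => S
  | n + 1 => bspan br (derS br S n) (derS br S n)

/-- The subalgebra `S` is solvable. -/
def IsSolvableSub (br : Bil L) (S : Submodule ℂ L) : Prop :=
  ∃ m, derS br S m = ⊥

/-- `N` is the nilradical (maximal nilpotent ideal) of the subalgebra `S`. -/
def IsNilradicalIn (br : Bil L) (S N : Submodule ℂ L) : Prop :=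
  IsIdealIn br S N ∧ IsNilpotentSub br N ∧
    ∀ I : Submodule ℂ L, IsIdealIn br S I → IsNilpotentSub br I → I ≤ N

/-- `N` is the nilradical of the whole algebra. -/
abbrev IsNilradical (br : Bil L) (N : Submodule ℂ L) : Prop := IsNilradicalIn br ⊤ N

/-- `N² = [N, N]`. -/
abbrev sqr (br : Bil L) (N : Submodule ℂ L) : Submodule ℂ L := bspan br N N

/-- `dim (N / N²)`. -/
noncomputable def dimModSq (br : Bil L) (N : Submodule ℂ L) : ℕ :=
  finrank ℂ (↥N ⧸ (Submodule.comap N.subtype (sqr br N)))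

/-- The subalgebra `S` splits as a direct sum of two nonzero ideals. -/
def IsSplitIn (br : Bil L) (S : Submodule ℂ L) : Prop :=
  ∃ A B : Submodule ℂ L, IsIdealIn br S A ∧ IsIdealIn br S B ∧
    A ≠ ⊥ ∧ B ≠ ⊥ ∧ A ⊓ B = ⊥ ∧ A ⊔ B = S

/-- The subalgebra `S` is abelian. -/
def IsAbelianIn (br : Bil L) (S : Submodule ℂ L) : Prop :=
  ∀ x ∈ S, ∀ y ∈ S, br x y = 0

section Two
variable {L1 : Type v} {L2 : Type w} [AddCommGroup L1] [Module ℂ L1]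
  [AddCommGroup L2] [Module ℂ L2]

/-- A bracket-preserving linear isomorphism between the subalgebra `S1` of `L1` and
the subalgebra `S2` of `L2`. -/
def SubAlgIso (br1 : Bil L1) (S1 : Submodule ℂ L1) (br2 : Bil L2) (S2 : Submodule ℂ L2) :
    Prop :=
  ∃ φ : S1 →ₗ[ℂ] L2, Function.Injective φ ∧ Set.range ⇑φ = (S2 : Set L2) ∧
    ∀ x y z : S1, (z : L1) = br1 (x : L1) (y : L1) → φ z = br2 (φ x) (φ y)

/-- An isomorphism of the two algebras. -/
def AlgIso (br1 : Bil L1) (br2 : Bil L2) : Prop :=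
  ∃ φ : L1 ≃ₗ[ℂ] L2, ∀ x y : L1, φ (br1 x y) = br2 (φ x) (φ y)

end Two

set_option maxHeartbeats 4000000 in
/-- Theorem 5.10, from Example 5.9. Any `(n+1)`-dimensional solvable
Leibniz algebra whose nilradical is the null-filiform algebra
`NFₙ : [e_i, e_1] = e_{i+1}` admits a basis `{e_1, …, e_n, x}` with the indicated table
(indices are written `0`-based: `e_{i+1} ↦ e i`). -/
theorem stmt14 {L : Type u} [AddCommGroup L] [Module ℂ L] [FiniteDimensional ℂ L]
    (n : ℕ) (hn : 2 ≤ n)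
    (br0 : Bil (Fin n → ℂ))
    (hbr0 : ∀ i j : Fin n, br0 (Pi.single i 1) (Pi.single j 1) =
      if (j : ℕ) = 0 then
        (if h : (i : ℕ) + 1 < n then Pi.single (⟨(i : ℕ) + 1, h⟩ : Fin n) 1 else 0)
      else 0)
    (br : Bil L) (hleib : IsLeibniz br) (hsolv : IsSolvableSub br (⊤ : Submodule ℂ L))
    (hdim : finrank ℂ L = n + 1)
    (N : Submodule ℂ L) (hN : IsNilradical br N)
    (hiso : SubAlgIso br0 ⊤ br N) :
    ∃ (e : Fin n → L) (x : L),
      LinearIndependent ℂ (Sum.elim e (fun _ : Unit => x)) ∧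
      Submodule.span ℂ (Set.range (Sum.elim e (fun _ : Unit => x))) = ⊤ ∧
      (∀ i j : Fin n, br (e i) (e j) =
        if (j : ℕ) = 0 then
          (if h : (i : ℕ) + 1 < n then e ⟨(i : ℕ) + 1, h⟩ else 0)
        else 0) ∧
      (∀ j : Fin n, br x (e j) = if (j : ℕ) = 0 then e j else 0) ∧
      (∀ i : Fin n, br (e i) x = (-(((i : ℕ) + 1 : ℕ) : ℂ)) • e i) ∧
      br x x = 0 := by
  classical
  obtain ⟨φ, hφinj, hφrange, hφmul⟩ := hiso
  -- the embedding ψ of (Fin n → ℂ) into L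
  set ψ : (Fin n → ℂ) →ₗ[ℂ] L := φ ∘ₗ (Submodule.topEquiv.symm : (Fin n → ℂ) ≃ₗ[ℂ] _).toLinearMap with hψdef
  have hψinj : Function.Injective ψ := hφinj.comp Submodule.topEquiv.symm.injective
  have hψrange : Set.range ⇑ψ = (N : Set L) := by
    rw [hψdef, LinearMap.coe_comp, Set.range_comp, LinearEquiv.coe_coe,
      Set.range_eq_univ.mpr Submodule.topEquiv.symm.surjective, Set.image_univ, hφrange]
  have hψmul : ∀ a b : Fin n → ℂ, ψ (br0 a b) = br (ψ a) (ψ b) := fun a b =>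
    hφmul (Submodule.topEquiv.symm a) (Submodule.topEquiv.symm b)
      (Submodule.topEquiv.symm (br0 a b)) rfl
  -- the null-filiform basis of N
  set f : Fin n → L := fun i => ψ (Pi.single i 1) with hfdef
  have hψrangeSub : LinearMap.range ψ = N :=
    SetLike.ext' (by rw [LinearMap.coe_range, hψrange])
  have hfN : ∀ i, f i ∈ N := by
    intro i
    rw [← hψrangeSub]
    exact LinearMap.mem_range_self _ _
  have hbfun : ⇑(Pi.basisFun ℂ (Fin n)) = fun i : Fin n => (Pi.single i 1 : Fin n → ℂ) := by
    funext i; exact Pi.basisFun_apply ℂ (Fin n) i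
  have hfind : LinearIndependent ℂ f := by
    have h1 : LinearIndependent ℂ (fun i : Fin n => (Pi.single i 1 : Fin n → ℂ)) :=
      hbfun ▸ (Pi.basisFun ℂ (Fin n)).linearIndependent
    exact h1.map' ψ (LinearMap.ker_eq_bot.mpr hψinj)
  have hfspan : Submodule.span ℂ (Set.range f) = N := by
    have h2 : Set.range f = ⇑ψ '' Set.range (fun i : Fin n => (Pi.single i 1 : Fin n → ℂ)) := by
      rw [← Set.range_comp]; rfl
    rw [h2, ← Submodule.map_span, ← hbfun, Basis.span_eq, Submodule.map_top, hψrangeSub]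
  -- multiplication table
  have table : ∀ i j : Fin n, br (f i) (f j) =
      if (j : ℕ) = 0 then
        (if h : (i : ℕ) + 1 < n then f ⟨(i : ℕ) + 1, h⟩ else 0)
      else 0 := by
    intro i j
    rw [hfdef]
    simp only
    rw [← hψmul, hbr0]
    split
    · split
      · rfl
      · exact map_zero ψ
    · exact map_zero ψ
  -- basic bracket facts
  have hNideal : ∀ v ∈ N, ∀ z : L, br v z ∈ N ∧ br z v ∈ N := by
    intro v hv z
    exact hN.1.2 v hv z trivial
  -- squares annihilate on the left
  have sq0 : ∀ a w : L, br a (br w w) = 0 := by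
    intro a w
    have := hleib a w w
    linear_combination (norm := module) this.symm
  -- the span of squares K is a nilpotent ideal, hence K ≤ N
  set K : Submodule ℂ L := Submodule.span ℂ {z : L | ∃ w, z = br w w} with hKdef
  have sqK : ∀ w : L, br w w ∈ K := fun w => Submodule.subset_span ⟨w, rfl⟩
  have sumK : ∀ a b : L, br a b + br b a ∈ K := by
    intro a b
    have h : br a b + br b a = br (a + b) (a + b) - br a a - br b b := by
      simp only [map_add, LinearMap.add_apply]
      abel
    rw [h]
    exact sub_mem (sub_mem (sqK _) (sqK _)) (sqK _)
  have leftK : ∀ k ∈ K, ∀ a : L, br a k = 0 := by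
    intro k hk
    induction hk using Submodule.span_induction with
    | mem x h => obtain ⟨w, rfl⟩ := h; exact fun a => sq0 a w
    | zero => intro a; simp
    | add x y hx hy ihx ihy => intro a; rw [map_add, ihx a, ihy a, add_zero]
    | smul c x hx ih => intro a; rw [map_smul, ih a, smul_zero]
  have KleN : K ≤ N := by
    apply hN.2.2
    · refine ⟨le_top, ?_⟩
      intro k hk
      have hright : ∀ z : L, br k z ∈ K := by
        induction hk using Submodule.span_induction with
        | mem x h =>
          obtain ⟨w, rfl⟩ := h
          intro z
          rw [hleib w w z]
          exact sumK (br w z) w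
        | zero => intro z; simp
        | add x y hx hy ihx ihy => intro z; rw [map_add, LinearMap.add_apply]; exact add_mem (ihx z) (ihy z)
        | smul c x hx ih => intro z; rw [map_smul, LinearMap.smul_apply]; exact smul_mem _ _ (ih z)
      intro z _
      exact ⟨hright z, by rw [leftK k hk z]; exact zero_mem K⟩
    · refine ⟨1, ?_⟩
      show bspan br (lcs br K 0) K = ⊥
      rw [eq_bot_iff]
      apply Submodule.span_le.mpr
      rintro z ⟨a, ha, b, hb, rfl⟩
      rw [SetLike.mem_coe, Submodule.mem_bot]
      exact leftK b hb a
  -- pick y outside N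
  have hNrank : finrank ℂ ↥N = n := by
    rw [← hfspan]
    simpa using finrank_span_eq_card hfind
  have hNneTop : N ≠ ⊤ := by
    intro h
    rw [h, finrank_top, hdim] at hNrank
    omega
  obtain ⟨y, hyN⟩ : ∃ y : L, y ∉ N := by
    by_contra h
    push_neg at h
    exact hNneTop (Submodule.eq_top_iff'.mpr h)
  -- the basis B of L given by f and y
  set g : Fin n ⊕ Unit → L := Sum.elim f (fun _ => y) with hgdef
  have hspanTop : ⊤ ≤ Submodule.span ℂ (Set.range g) := by
    have hlt : N < N ⊔ Submodule.span ℂ {y} := by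
      refine lt_of_le_of_ne le_sup_left ?_
      intro h
      apply hyN
      rw [h]
      exact Submodule.mem_sup_right (Submodule.mem_span_singleton_self y)
    have hr : finrank ℂ ↥(N ⊔ Submodule.span ℂ {y}) = n + 1 := by
      have h1 := Submodule.finrank_lt_finrank_of_lt hlt
      have h2 := Submodule.finrank_le (N ⊔ Submodule.span ℂ {y})
      omega
    have htop : N ⊔ Submodule.span ℂ {y} = ⊤ := eq_top_of_finrank_eq (by rw [hr, hdim])
    rw [← htop]
    apply sup_le
    · rw [← hfspan]
      apply Submodule.span_mono
      intro v hv
      obtain ⟨i, rfl⟩ := hv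
      exact ⟨Sum.inl i, rfl⟩
    · apply Submodule.span_mono
      intro v hv
      rw [Set.mem_singleton_iff] at hv
      exact ⟨Sum.inr (), hv.symm⟩
  have hcard : Fintype.card (Fin n ⊕ Unit) = finrank ℂ L := by
    simp [hdim]
  set B : Basis (Fin n ⊕ Unit) ℂ L := basisOfTopLeSpanOfCardEqFinrank g hspanTop hcard with hBdef
  have hBcoe : ⇑B = g := coe_basisOfTopLeSpanOfCardEqFinrank g hspanTop hcard
  have hBl : ∀ i : Fin n, B (Sum.inl i) = f i := fun i => by rw [hBcoe]; rfl
  have hBr : B (Sum.inr ()) = y := by rw [hBcoe]; rfl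
  have hreprf : ∀ (i : Fin n) (s : Fin n ⊕ Unit),
      B.repr (f i) s = if Sum.inl i = s then 1 else 0 := by
    intro i s
    rw [← hBl i, B.repr_self, Finsupp.single_apply]
  -- the filtration F k
  set F : ℕ → Submodule ℂ L := fun k => Submodule.span ℂ (f '' {j : Fin n | k ≤ (j : ℕ)})
    with hFdef
  have hfF : ∀ (k : ℕ) (j : Fin n), k ≤ (j : ℕ) → f j ∈ F k := by
    intro k j h
    exact Submodule.subset_span ⟨j, h, rfl⟩
  have hFmono : ∀ k : ℕ, F (k + 1) ≤ F k := by
    intro k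
    apply Submodule.span_mono
    rintro v ⟨j, hj, rfl⟩
    have hj' : k + 1 ≤ (j : ℕ) := hj
    exact ⟨j, Nat.le_of_succ_le hj', rfl⟩
  have memF_coords : ∀ (k : ℕ) (v : L), v ∈ F k →
      (B.repr v (Sum.inr ()) = 0 ∧ ∀ j : Fin n, (j : ℕ) < k → B.repr v (Sum.inl j) = 0) := by
    intro k v hv
    induction hv using Submodule.span_induction with
    | mem x h =>
      obtain ⟨j, hj, rfl⟩ := h
      have hj2 : k ≤ (j : ℕ) := hj
      constructor
      · rw [hreprf]; simp
      · intro j' hj'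
        rw [hreprf]
        have hne : (Sum.inl j : Fin n ⊕ Unit) ≠ Sum.inl j' := by
          intro h
          rw [Sum.inl.injEq] at h
          subst h
          omega
        simp [hne]
    | zero => simp
    | add a b ha hb iha ihb =>
      refine ⟨by rw [map_add, Finsupp.add_apply, iha.1, ihb.1, add_zero], ?_⟩
      intro j hj
      rw [map_add, Finsupp.add_apply, iha.2 j hj, ihb.2 j hj, add_zero]
    | smul c a ha ih =>
      refine ⟨by rw [map_smul, Finsupp.smul_apply, ih.1, smul_zero], ?_⟩
      intro j hj
      rw [map_smul, Finsupp.smul_apply, ih.2 j hj, smul_zero]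
  have coords_memF : ∀ (k : ℕ) (v : L), B.repr v (Sum.inr ()) = 0 →
      (∀ j : Fin n, (j : ℕ) < k → B.repr v (Sum.inl j) = 0) → v ∈ F k := by
    intro k v h1 h2
    have hv : v = ∑ s : Fin n ⊕ Unit, B.repr v s • B s := (B.sum_repr v).symm
    rw [hv, Fintype.sum_sum_type]
    apply add_mem
    · apply Submodule.sum_mem
      intro j _
      by_cases hj : (j : ℕ) < k
      · rw [h2 j hj, zero_smul]; exact zero_mem _
      · exact Submodule.smul_mem _ _ (by rw [hBl]; exact hfF k j (by omega))
    · apply Submodule.sum_mem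
      intro u _
      have : u = () := rfl
      rw [this, h1, zero_smul]
      exact Submodule.zero_mem _
  have memN_coord : ∀ v ∈ N, B.repr v (Sum.inr ()) = 0 := by
    intro v hv
    rw [← hfspan] at hv
    induction hv using Submodule.span_induction with
    | mem x h => obtain ⟨i, rfl⟩ := h; rw [hreprf]; simp
    | zero => simp
    | add a b ha hb iha ihb => rw [map_add, Finsupp.add_apply, iha, ihb, add_zero]
    | smul c a ha ih => rw [map_smul, Finsupp.smul_apply, ih, smul_zero]
  have hF0 : F 0 = N := by
    rw [hFdef, ← hfspan]
    congr 1
    simp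
  have FleN : ∀ k, F k ≤ N := fun k => by
    rw [← hF0]
    apply Submodule.span_mono
    rintro v ⟨j, _, rfl⟩
    exact ⟨j, Nat.zero_le _, rfl⟩
  have Fbot : ∀ k, n ≤ k → ∀ v ∈ F k, v = 0 := by
    intro k hk v hv
    obtain ⟨h1, h2⟩ := memF_coords k v hv
    have : ∀ s : Fin n ⊕ Unit, B.repr v s = 0 := by
      rintro (j | u)
      · exact h2 j (by omega)
      · exact h1
    have hrepr0 : B.repr v = 0 := Finsupp.ext this
    have := congrArg (fun w => B.repr.symm w) hrepr0
    simpa using this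
  -- brackets with right argument in F 1 vanish
  have hf1 : (1 : ℕ) < n := by omega
  have hn0 : (0 : ℕ) < n := by omega
  set i0 : Fin n := ⟨0, hn0⟩ with hi0def
  have hi0val : (i0 : ℕ) = 0 := rfl
  have hf1eq : f ⟨1, hf1⟩ = br (f i0) (f i0) := by
    rw [table]
    rw [if_pos hi0val, dif_pos (show (i0 : ℕ) + 1 < n by omega)]
  have Hright0 : ∀ (j : Fin n), (j : ℕ) ≠ 0 → ∀ a : L, br a (f j) = 0 := by
    intro j hj a
    rcases Nat.lt_or_ge 1 (j : ℕ) with hj2 | hj2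
    · -- j ≥ 2 : f j = br A B + br B A
      have hjm : (j : ℕ) - 1 < n := by omega
      set jm : Fin n := ⟨(j : ℕ) - 1, hjm⟩ with hjmdef
      have h1 : br (f jm) (f i0) = f j := by
        rw [table]
        have hlt : (jm : ℕ) + 1 < n := by
          show (j : ℕ) - 1 + 1 < n
          omega
        rw [if_pos hi0val, dif_pos hlt]
        congr 1
        apply Fin.ext
        show (j : ℕ) - 1 + 1 = (j : ℕ)
        omega
      have h2 : br (f i0) (f jm) = 0 := by
        rw [table]
        rw [if_neg (show ¬((jm : ℕ) = 0) by show ¬((j:ℕ) - 1 = 0); omega)]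
      have hfj : f j = br (f jm) (f i0) + br (f i0) (f jm) := by rw [h1, h2, add_zero]
      have hsq : f j = br (f jm + f i0) (f jm + f i0) - br (f jm) (f jm) - br (f i0) (f i0) := by
        rw [hfj]
        simp only [map_add, LinearMap.add_apply]
        abel
      rw [hsq]
      simp only [map_sub]
      rw [sq0, sq0, sq0]
      simp
    · -- j = 1 : f j is a square
      have : (j : ℕ) = 1 := by omega
      have hj1 : j = ⟨1, hf1⟩ := Fin.ext this
      rw [hj1, hf1eq, sq0]
  have RK : ∀ v ∈ F 1, ∀ a : L, br a v = 0 := by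
    intro v hv
    induction hv using Submodule.span_induction with
    | mem x h =>
      obtain ⟨j, hj, rfl⟩ := h
      have hj2 : (1 : ℕ) ≤ (j : ℕ) := hj
      exact Hright0 j (by omega)
    | zero => intro a; simp
    | add a b ha hb iha ihb => intro c; rw [map_add, iha c, ihb c, add_zero]
    | smul c a ha ih => intro d; rw [map_smul, ih d, smul_zero]
  -- bracket depends only on the f i0 coordinate of the right argument
  have memF1 : ∀ v ∈ N, B.repr v (Sum.inl i0) = 0 → v ∈ F 1 := by
    intro v hv h0
    apply coords_memF 1 v (memN_coord v hv)
    intro j hj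
    have : j = i0 := Fin.ext (by omega)
    rw [this]; exact h0
  have splitN : ∀ v ∈ N, v - B.repr v (Sum.inl i0) • f i0 ∈ F 1 := by
    intro v hv
    apply memF1
    · exact sub_mem hv (Submodule.smul_mem _ _ (hfN i0))
    · rw [map_sub, Finsupp.sub_apply, map_smul, Finsupp.smul_apply, hreprf]
      simp
  have LEMR : ∀ (a : L), ∀ v ∈ N, br a v = B.repr v (Sum.inl i0) • br a (f i0) := by
    intro a v hv
    have h := RK (v - B.repr v (Sum.inl i0) • f i0) (splitN v hv) a
    rw [map_sub, map_smul, sub_eq_zero] at h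
    rw [h]
  -- right bracket with f i0 raises filtration
  have RF : ∀ (k : ℕ), ∀ v ∈ F k, br v (f i0) ∈ F (k + 1) := by
    intro k v hv
    induction hv using Submodule.span_induction with
    | mem x h =>
      obtain ⟨j, hj, rfl⟩ := h
      have hj2 : k ≤ (j : ℕ) := hj
      rw [table]
      rw [if_pos hi0val]
      by_cases hlt : (j : ℕ) + 1 < n
      · rw [dif_pos hlt]
        exact hfF (k + 1) _ (by simp; omega)
      · rw [dif_neg hlt]
        exact zero_mem _
    | zero => simp
    | add a b ha hb iha ihb => rw [LinearMap.map_add, LinearMap.add_apply]; exact add_mem iha ihb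
    | smul c a ha ih => rw [LinearMap.map_smul, LinearMap.smul_apply]; exact smul_mem _ _ ih
  -- the right-multiplication operator d by y
  set d : L →ₗ[ℂ] L := br.flip y with hddef
  have hdapp : ∀ v : L, d v = br v y := fun v => rfl
  have hder : ∀ a b : L, d (br a b) = br (d a) b + br a (d b) := by
    intro a b
    rw [hdapp, hdapp, hdapp]
    exact hleib a b y
  have hdN : ∀ v ∈ N, d v ∈ N := by
    intro v hv
    rw [hdapp]
    exact (hNideal v hv y).1
  set μ : ℂ := B.repr (d (f i0)) (Sum.inl i0) with hμdef
  set b : L := br y (f i0) with hbdef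
  have hbN : b ∈ N := (hNideal (f i0) (hfN i0) y).2
  set Q : L := br y y with hQdef
  have hQN : Q ∈ N := KleN (sqK y)
  have hf1ne : f ⟨1, hf1⟩ ≠ 0 := hfind.ne_zero ⟨1, hf1⟩
  -- coefficient of f 0 in b equals -μ
  have hb0 : B.repr b (Sum.inl i0) = -μ := by
    have e2 : d (f ⟨1, hf1⟩) = br (d (f i0)) (f i0) + μ • f ⟨1, hf1⟩ := by
      rw [hf1eq, hder]
      congr 1
      rw [LEMR (f i0) (d (f i0)) (hdN _ (hfN i0)), ← hμdef, ← hf1eq]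
    have e1 : br (d (f i0)) (f i0) = d (f ⟨1, hf1⟩) + B.repr b (Sum.inl i0) • f ⟨1, hf1⟩ := by
      have h := hleib (f i0) y (f i0)
      rw [← hdapp, ← hf1eq] at h
      rw [h, ← hdapp]
      congr 1
      rw [← hbdef, LEMR (f i0) b hbN, ← hf1eq]
    have : (μ + B.repr b (Sum.inl i0)) • f ⟨1, hf1⟩ = 0 := by
      have h5 := e1
      rw [e2] at h5
      linear_combination (norm := module) (-1 : ℂ) • h5
    rcases smul_eq_zero.mp this with h | h
    · linear_combination h
    · exact absurd h hf1ne
  -- coefficient of f 0 in Q vanishes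
  have hQ0 : B.repr Q (Sum.inl i0) = 0 := by
    have h := hleib (f i0) y y
    have h2 : br (f i0) Q = 0 := by
      rw [hQdef]
      linear_combination (norm := module) h.symm
    rw [LEMR (f i0) Q hQN, ← hf1eq] at h2
    rcases smul_eq_zero.mp h2 with h3 | h3
    · exact h3
    · exact absurd h3 hf1ne
  have hQF1 : Q ∈ F 1 := memF1 Q hQN hQ0
  have hbF1 : b + μ • f i0 ∈ F 1 := by
    have := splitN b hbN
    rw [hb0] at this
    simpa [sub_eq_add_neg, neg_smul] using this
  -- triangularity of d on the filtration
  have dfj : ∀ k : ℕ, ∀ hk : k < n,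
      d (f ⟨k, hk⟩) - (((k : ℂ) + 1) * μ) • f ⟨k, hk⟩ ∈ F (k + 1) := by
    intro k
    induction k with
    | zero =>
      intro hk
      have h := splitN (d (f i0)) (hdN _ (hfN i0))
      rw [← hμdef] at h
      have h2 : (⟨0, hk⟩ : Fin n) = i0 := rfl
      rw [h2, show (((0:ℕ):ℂ) + 1) * μ = μ by norm_num]
      exact h
    | succ k ih =>
      intro hk
      have hk' : k < n := by omega
      have htab : br (f ⟨k, hk'⟩) (f i0) = f ⟨k + 1, hk⟩ := by
        rw [table, if_pos hi0val, dif_pos (show (k : ℕ) + 1 < n from hk)]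
      set u : L := d (f ⟨k, hk'⟩) - (((k : ℂ) + 1) * μ) • f ⟨k, hk'⟩ with hudef
      have hu : u ∈ F (k + 1) := ih hk'
      have hbru : br u (f i0) ∈ F (k + 2) := RF (k + 1) u hu
      have hexp : d (f ⟨k + 1, hk⟩) - (((k : ℂ) + 1 + 1) * μ) • f ⟨k + 1, hk⟩ = br u (f i0) := by
        have h1 : d (f ⟨k + 1, hk⟩) = br (d (f ⟨k, hk'⟩)) (f i0) + br (f ⟨k, hk'⟩) (d (f i0)) := by
          rw [← htab, hder]
        have h2 : br (f ⟨k, hk'⟩) (d (f i0)) = μ • f ⟨k + 1, hk⟩ := by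
          rw [LEMR (f ⟨k, hk'⟩) (d (f i0)) (hdN _ (hfN i0)), ← hμdef, htab]
        have h3 : br u (f i0) = br (d (f ⟨k, hk'⟩)) (f i0) - (((k : ℂ) + 1) * μ) • f ⟨k + 1, hk⟩ := by
          rw [hudef, map_sub, LinearMap.sub_apply, map_smul, LinearMap.smul_apply, htab]
        rw [h1, h2, h3]
        module
      rw [show ((k + 1 : ℕ) : ℂ) = (k : ℂ) + 1 by push_cast; ring, hexp]
      exact hbru
  have hFle : ∀ {k l : ℕ}, k ≤ l → F l ≤ F k := by
    intro k l hkl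
    apply Submodule.span_mono
    rintro v ⟨j, hj, rfl⟩
    exact ⟨j, le_trans hkl hj, rfl⟩
  have hgspanmem : ∀ z : L, z ∈ Submodule.span ℂ (Set.range g) := fun z => hspanTop trivial
  -- μ is nonzero, else the whole algebra is nilpotent
  have hμne : μ ≠ 0 := by
    intro hμ0
    have hdF : ∀ k : ℕ, ∀ v ∈ F k, d v ∈ F (k + 1) := by
      intro k v hv
      induction hv using Submodule.span_induction with
      | mem x h =>
        obtain ⟨j, hj, rfl⟩ := h
        have hj2 : k ≤ (j : ℕ) := hj
        have h1 := dfj (j : ℕ) j.isLt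
        rw [hμ0, mul_zero, zero_smul, sub_zero] at h1
        have h2 : (⟨(j : ℕ), j.isLt⟩ : Fin n) = j := Fin.ext rfl
        rw [h2] at h1
        exact hFle (by omega) h1
      | zero => simp
      | add a b ha hb iha ihb => rw [map_add]; exact add_mem iha ihb
      | smul c a ha ih => rw [map_smul]; exact smul_mem _ _ ih
    have hbrF : ∀ k : ℕ, ∀ v ∈ F k, ∀ z : L, br v z ∈ F (k + 1) := by
      intro k v hv z
      induction hgspanmem z using Submodule.span_induction with
      | mem x h =>
        obtain ⟨s, rfl⟩ := h
        rcases s with j | u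
        · show br v (f j) ∈ F (k + 1)
          by_cases hj0 : (j : ℕ) = 0
          · have : j = i0 := Fin.ext hj0
            rw [this]
            exact RF k v hv
          · rw [Hright0 j hj0 v]
            exact zero_mem _
        · show br v y ∈ F (k + 1)
          rw [← hdapp]
          exact hdF k v hv
      | zero => simp
      | add a c ha hc iha ihc => rw [map_add]; exact add_mem iha ihc
      | smul c a ha ih => rw [map_smul]; exact smul_mem _ _ ih
    have hbF1' : b ∈ F 1 := by
      have := hbF1
      rw [hμ0, zero_smul, add_zero] at this
      exact this
    have A1 : ∀ a z : L, br a z ∈ F 1 := by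
      intro a z
      induction hgspanmem a using Submodule.span_induction with
      | mem x h =>
        obtain ⟨s, rfl⟩ := h
        rcases s with j | u
        · show br (f j) z ∈ F 1
          exact hbrF 0 (f j) (hfF 0 j (Nat.zero_le _)) z
        · show br y z ∈ F 1
          induction hgspanmem z using Submodule.span_induction with
          | mem x h =>
            obtain ⟨s, rfl⟩ := h
            rcases s with j | u
            · show br y (f j) ∈ F 1
              by_cases hj0 : (j : ℕ) = 0
              · have : j = i0 := Fin.ext hj0
                rw [this]
                exact hbF1'
              · rw [Hright0 j hj0 y]
                exact zero_mem _
            · exact hQF1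
          | zero => simp
          | add a c ha hc iha ihc => rw [map_add]; exact add_mem iha ihc
          | smul c a ha ih => rw [map_smul]; exact smul_mem _ _ ih
      | zero => simp
      | add a c ha hc iha ihc => rw [map_add, LinearMap.add_apply]; exact add_mem iha ihc
      | smul c a ha ih => rw [map_smul, LinearMap.smul_apply]; exact smul_mem _ _ ih
    have lcsF : ∀ k : ℕ, lcs br ⊤ (k + 1) ≤ F (k + 1) := by
      intro k
      induction k with
      | zero =>
        show bspan br (lcs br ⊤ 0) ⊤ ≤ F 1
        apply Submodule.span_le.mpr
        rintro z ⟨a, _, c, _, rfl⟩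
        exact A1 a c
      | succ k ih =>
        show bspan br (lcs br ⊤ (k + 1)) ⊤ ≤ F (k + 2)
        apply Submodule.span_le.mpr
        rintro z ⟨a, ha, c, _, rfl⟩
        exact hbrF (k + 1) a (ih ha) c
    have hnil : IsNilpotentSub br (⊤ : Submodule ℂ L) := by
      refine ⟨n, ?_⟩
      rw [eq_bot_iff]
      intro v hv
      rw [Submodule.mem_bot]
      have h1 : lcs br ⊤ n ≤ F n := by
        have : n = (n - 1) + 1 := by omega
        rw [this]
        exact lcsF (n - 1)
      exact Fbot n le_rfl v (h1 hv)
    have htopN : (⊤ : Submodule ℂ L) ≤ N :=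
      hN.2.2 ⊤ ⟨le_top, fun a _ c _ => ⟨trivial, trivial⟩⟩ hnil
    exact hyN (htopN trivial)
  -- surjectivity of d - c on the filtration pieces
  have SURJ : ∀ (c : ℂ) (k₀ : ℕ), (∀ j : Fin n, k₀ ≤ (j : ℕ) → (((j : ℕ) : ℂ) + 1) * μ - c ≠ 0) →
      ∀ (fuel k : ℕ), k₀ ≤ k → n ≤ k + fuel → ∀ u ∈ F k, ∃ w ∈ F k, d w - c • w = u := by
    intro c k₀ hc fuel
    induction fuel with
    | zero =>
      intro k hk0 hnk u hu
      refine ⟨0, zero_mem _, ?_⟩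
      rw [Fbot k (by omega) u hu]
      simp
    | succ fuel ih =>
      intro k hk0 hnk u hu
      by_cases hkn : n ≤ k
      · refine ⟨0, zero_mem _, ?_⟩
        rw [Fbot k hkn u hu]
        simp
      · push_neg at hkn
        set j : Fin n := ⟨k, hkn⟩ with hjdef
        have hjval : (j : ℕ) = k := rfl
        set γ : ℂ := (((j : ℕ) : ℂ) + 1) * μ - c with hγdef
        have hγne : γ ≠ 0 := hc j (by omega)
        set uc : ℂ := B.repr u (Sum.inl j) with hucdef
        set w0 : L := (uc / γ) • f j with hw0def
        have hw0F : w0 ∈ F k := Submodule.smul_mem _ _ (hfF k j (by omega))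
        set u' : L := d (f j) - ((((j : ℕ) : ℂ) + 1) * μ) • f j with hu'def
        have hu'F : u' ∈ F (k + 1) := dfj k hkn
        have hE : d w0 - c • w0 = uc • f j + (uc / γ) • u' := by
          rw [hw0def, hu'def, map_smul]
          have : uc / γ * γ = uc := div_mul_cancel₀ uc hγne
          rw [hγdef] at this
          linear_combination (norm := module) (congrArg (fun t => t • f j) this)
        have hrem : u - (d w0 - c • w0) ∈ F (k + 1) := by
          rw [hE]
          apply coords_memF
          · rw [map_sub, map_add, map_smul, map_smul, Finsupp.sub_apply, Finsupp.add_apply,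
              Finsupp.smul_apply, Finsupp.smul_apply, (memF_coords k u hu).1, hreprf,
              (memF_coords (k + 1) u' hu'F).1]
            simp
          · intro j' hj'
            rw [map_sub, map_add, map_smul, map_smul, Finsupp.sub_apply, Finsupp.add_apply,
              Finsupp.smul_apply, Finsupp.smul_apply, hreprf,
              (memF_coords (k + 1) u' hu'F).2 j' hj']
            by_cases hjj : j = j'
            · subst hjj
              rw [if_pos rfl, ← hucdef]
              simp
            · have h1 : (Sum.inl j : Fin n ⊕ Unit) ≠ Sum.inl j' := by
                intro h; exact hjj (Sum.inl.inj h)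
              rw [if_neg h1, (memF_coords k u hu).2 j' (by
                rcases Nat.lt_or_ge (j' : ℕ) k with h | h
                · exact h
                · exfalso
                  have : (j' : ℕ) = k := by omega
                  exact hjj (Fin.ext (by rw [hjval, this])))]
              simp
        obtain ⟨w', hw'F, hw'T⟩ := ih (k + 1) (by omega) (by omega) _ hrem
        refine ⟨w0 + w', add_mem hw0F (hFle (by omega) hw'F), ?_⟩
        rw [map_add, smul_add]
        linear_combination (norm := module) hw'T
  -- the eigenvector e1 and the chain E
  have hμcond : ∀ j : Fin n, 1 ≤ (j : ℕ) → (((j : ℕ) : ℂ) + 1) * μ - μ ≠ 0 := by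
    intro j hj
    have h1 : (((j : ℕ) : ℂ) + 1) * μ - μ = ((j : ℕ) : ℂ) * μ := by ring
    rw [h1]
    exact mul_ne_zero (Nat.cast_ne_zero.mpr (by omega)) hμne
  have h0cond : ∀ j : Fin n, 1 ≤ (j : ℕ) → (((j : ℕ) : ℂ) + 1) * μ - 0 ≠ 0 := by
    intro j hj
    rw [sub_zero]
    exact mul_ne_zero (Nat.cast_add_one_ne_zero (j : ℕ)) hμne
  have hTf0 : d (f i0) - μ • f i0 ∈ F 1 := by
    have h := splitN (d (f i0)) (hdN _ (hfN i0))
    rw [← hμdef] at h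
    exact h
  obtain ⟨w, hwF, hwT⟩ := SURJ μ 1 hμcond n 1 le_rfl (by omega)
    (-(d (f i0) - μ • f i0)) (neg_mem hTf0)
  set e1 : L := f i0 + w with he1def
  have hde1 : d e1 = μ • e1 := by
    rw [he1def, map_add, smul_add]
    linear_combination (norm := module) hwT
  set E : ℕ → L := fun k => Nat.rec e1 (fun _ v => br v e1) k with hEdef
  have hE0 : E 0 = e1 := rfl
  have hEsucc : ∀ k : ℕ, E (k + 1) = br (E k) e1 := fun k => rfl
  have hdE : ∀ k : ℕ, d (E k) = ((((k : ℕ) : ℂ) + 1) * μ) • E k := by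
    intro k
    induction k with
    | zero =>
      rw [hE0, hde1]
      norm_num
    | succ k ih =>
      rw [hEsucc, hder, ih, hde1, map_smul, LinearMap.smul_apply, map_smul, ← hEsucc]
      push_cast
      module
  have hEf : ∀ (k : ℕ) (hk : k < n), E k - f ⟨k, hk⟩ ∈ F (k + 1) := by
    intro k
    induction k with
    | zero =>
      intro hk
      have h1 : (⟨0, hk⟩ : Fin n) = i0 := rfl
      rw [hE0, he1def, h1, add_sub_cancel_left]
      exact hwF
    | succ k ih =>
      intro hk
      have hk' : k < n := by omega
      have hbrw : br (E k) w = 0 := RK w hwF (E k)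
      have h1 : E (k + 1) = br (E k) (f i0) := by
        rw [hEsucc, he1def, map_add, hbrw, add_zero]
      have h2 : br (E k) (f i0) = f ⟨k + 1, hk⟩ + br (E k - f ⟨k, hk'⟩) (f i0) := by
        have htab : br (f ⟨k, hk'⟩) (f i0) = f ⟨k + 1, hk⟩ := by
          rw [table, if_pos hi0val, dif_pos (show (k : ℕ) + 1 < n from hk)]
        rw [map_sub, LinearMap.sub_apply, htab]
        module
      have h3 : br (E k - f ⟨k, hk'⟩) (f i0) ∈ F (k + 2) := RF (k + 1) _ (ih hk')
      rw [h1, h2, add_sub_cancel_left]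
      exact h3
  have hEF1 : ∀ k : ℕ, 1 ≤ k → k < n → E k ∈ F 1 := by
    intro k h1 h2
    have := hEf k h2
    have hEk : E k = f ⟨k, h2⟩ + (E k - f ⟨k, h2⟩) := by module
    rw [hEk]
    exact add_mem (hfF 1 _ h1) (hFle (by omega) this)
  have hEnz : E n = 0 := by
    have hn1 : n - 1 < n := by omega
    have h1 : E (n - 1) = f ⟨n - 1, hn1⟩ := by
      have h2 := hEf (n - 1) hn1
      have h3 : E (n - 1) - f ⟨n - 1, hn1⟩ = 0 := Fbot (n - 1 + 1) (by omega) _ h2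
      linear_combination (norm := module) h3
    have h4 : n = (n - 1) + 1 := by omega
    rw [h4, hEsucc, h1, he1def, map_add, RK w hwF, add_zero, table,
      if_pos hi0val, dif_neg (show ¬(((⟨n - 1, hn1⟩ : Fin n) : ℕ) + 1 < n) by
        simp only [Fin.val_mk]; omega)]
  set e : Fin n → L := fun j => E (j : ℕ) with hedef
  have hFspanE : ∀ fuel k : ℕ, n ≤ k + fuel → F k ≤ Submodule.span ℂ (Set.range e) := by
    intro fuel
    induction fuel with
    | zero =>
      intro k hk v hv
      rw [Fbot k (by omega) v hv]
      exact zero_mem _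
    | succ fuel ih =>
      intro k hk
      apply Submodule.span_le.mpr
      rintro v ⟨j, hj, rfl⟩
      have hj2 : k ≤ (j : ℕ) := hj
      have h1 : E (j : ℕ) - f ⟨(j : ℕ), j.isLt⟩ ∈ F ((j : ℕ) + 1) := hEf (j : ℕ) j.isLt
      have h2 : F ((j : ℕ) + 1) ≤ Submodule.span ℂ (Set.range e) := ih ((j : ℕ) + 1) (by omega)
      have h3 : f j = e j - (E (j : ℕ) - f ⟨(j : ℕ), j.isLt⟩) := by
        rw [hedef]
        simp only
        rw [show (⟨(j : ℕ), j.isLt⟩ : Fin n) = j from Fin.ext rfl]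
        module
      rw [h3]
      exact sub_mem (Submodule.subset_span ⟨j, rfl⟩) (h2 h1)
  have hNspanE : N ≤ Submodule.span ℂ (Set.range e) := by
    rw [← hF0]
    exact hFspanE n 0 (by omega)
  -- the correction term m
  obtain ⟨m, hmF, hmT0⟩ := SURJ 0 1 h0cond n 1 le_rfl (by omega) (μ⁻¹ • Q)
    (Submodule.smul_mem _ _ hQF1)
  have hdm : d m = μ⁻¹ • Q := by
    rw [← hmT0, zero_smul, sub_zero]
  have hbye1 : br y e1 = b := by
    rw [he1def, map_add, RK w hwF, add_zero, ← hbdef]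
  have hstst : d b = br Q e1 + μ • b := by
    have h := hleib y e1 y
    rw [hbye1] at h
    rw [← hdapp b, ← hdapp e1, hde1, map_smul] at h
    rw [hbye1, ← hQdef] at h
    exact h
  set ζ : L := br m e1 - E 0 - μ⁻¹ • b with hζdef
  have hbrmf0 : br m e1 = br m (f i0) := by
    rw [he1def, map_add, RK w hwF, add_zero]
  have hζF : ζ ∈ F 1 := by
    have h2 : br m (f i0) ∈ F 2 := RF 1 m hmF
    have h3 : E 0 + μ⁻¹ • b ∈ F 1 := by
      apply memF1
      · refine add_mem ?_ (Submodule.smul_mem _ _ hbN)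
        rw [hE0, he1def]
        exact add_mem (hfN i0) (FleN 1 hwF)
      · rw [map_add, Finsupp.add_apply, map_smul, Finsupp.smul_apply, hb0]
        have h4 : B.repr (E 0) (Sum.inl i0) = 1 := by
          rw [hE0, he1def, map_add, Finsupp.add_apply, hreprf, if_pos rfl,
            (memF_coords 1 w hwF).2 i0 (by omega)]
          norm_num
        rw [h4, smul_eq_mul, mul_neg, inv_mul_cancel₀ hμne]
        ring
    have h5 : ζ = br m (f i0) - (E 0 + μ⁻¹ • b) := by
      rw [hζdef, hbrmf0]
      module
    rw [h5]
    exact sub_mem (hFle (by omega) h2) h3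
  have hdζ : d ζ = μ • ζ := by
    rw [hζdef, map_sub, map_sub, map_smul, hder, hdm, hde1, hdE 0, hstst]
    rw [map_smul, LinearMap.smul_apply, map_smul]
    match_scalars <;> field_simp <;> ring
  -- injectivity of d - μ on F 1
  have hdF1 : ∀ v ∈ F 1, d v ∈ F 1 := by
    intro v hv
    induction hv using Submodule.span_induction with
    | mem a h =>
      obtain ⟨j, hj, rfl⟩ := h
      have hj2 : 1 ≤ (j : ℕ) := hj
      have h1 := dfj (j : ℕ) j.isLt
      have h2 : (⟨(j : ℕ), j.isLt⟩ : Fin n) = j := Fin.ext rfl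
      rw [h2] at h1
      have h3 : d (f j) = ((((j : ℕ) : ℂ) + 1) * μ) • f j +
          (d (f j) - ((((j : ℕ) : ℂ) + 1) * μ) • f j) := by module
      rw [h3]
      exact add_mem (Submodule.smul_mem _ _ (hfF 1 j hj2)) (hFle (by omega) h1)
    | zero => simp
    | add a c ha hc iha ihc => rw [map_add]; exact add_mem iha ihc
    | smul c a ha ih => rw [map_smul]; exact smul_mem _ _ ih
  set Top : L →ₗ[ℂ] L := d - μ • LinearMap.id with hTopdef
  have hTopapp : ∀ v : L, Top v = d v - μ • v := by
    intro v
    rw [hTopdef]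
    simp
  have hTmaps : ∀ v ∈ F 1, Top v ∈ F 1 := by
    intro v hv
    rw [hTopapp]
    exact sub_mem (hdF1 v hv) (Submodule.smul_mem _ _ hv)
  set Tres : ↥(F 1) →ₗ[ℂ] ↥(F 1) := LinearMap.restrict Top hTmaps
    with hTresdef
  have hTsurj : Function.Surjective Tres := by
    rintro ⟨u, hu⟩
    obtain ⟨w', hw'F, hw'T⟩ := SURJ μ 1 hμcond n 1 le_rfl (by omega) u hu
    refine ⟨⟨w', hw'F⟩, Subtype.ext ?_⟩
    show Top w' = u
    rw [hTopapp]
    exact hw'T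
  have hTinj : Function.Injective Tres := LinearMap.injective_iff_surjective.mpr hTsurj
  have hζ0 : ζ = 0 := by
    have h1 : Tres ⟨ζ, hζF⟩ = 0 := by
      apply Subtype.ext
      show Top ζ = 0
      rw [hTopapp, hdζ]
      simp
    have h2 : (⟨ζ, hζF⟩ : ↥(F 1)) = 0 := hTinj (by rw [h1, map_zero])
    exact congrArg Subtype.val h2
  have hbrme1 : br m e1 = E 0 + μ⁻¹ • b := by
    rw [hζdef] at hζ0
    linear_combination (norm := module) hζ0
  -- the element x and the final assembly
  set x : L := (-μ⁻¹) • y + m with hxdef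
  set ee : Fin n → L := e with heedef
  have hG4 : ∀ j : Fin n, br x (e j) = if (j : ℕ) = 0 then e j else 0 := by
    intro j
    by_cases hj0 : (j : ℕ) = 0
    · rw [if_pos hj0]
      have hji : j = i0 := Fin.ext hj0
      rw [hji]
      show br x (E 0) = E 0
      have h1 : br x (E 0) = (-μ⁻¹) • br y (E 0) + br m (E 0) := by
        rw [hxdef, map_add br ((-μ⁻¹) • y) m, LinearMap.add_apply,
          map_smul br (-μ⁻¹) y, LinearMap.smul_apply]
      rw [h1, hE0, hbye1, hbrme1, hE0]
      module
    · rw [if_neg hj0]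
      exact RK (e j) (hEF1 (j : ℕ) (by omega) j.isLt) x
  have hG5 : ∀ i : Fin n, br (e i) x = (-(((i : ℕ) + 1 : ℕ) : ℂ)) • e i := by
    intro i
    show br (E (i : ℕ)) x = (-(((i : ℕ) + 1 : ℕ) : ℂ)) • E (i : ℕ)
    have h1 : br (E (i : ℕ)) x = (-μ⁻¹) • d (E (i : ℕ)) + br (E (i : ℕ)) m := by
      rw [hxdef, map_add (br (E (i : ℕ))) ((-μ⁻¹) • y) m,
        map_smul (br (E (i : ℕ))) (-μ⁻¹) y, hdapp]
    rw [h1, RK m hmF, add_zero, hdE (i : ℕ)]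
    match_scalars
    push_cast
    field_simp
  have hG6 : br x x = 0 := by
    have hbrxy : br x y = 0 := by
      rw [hxdef, map_add br ((-μ⁻¹) • y) m, LinearMap.add_apply,
        map_smul br (-μ⁻¹) y, LinearMap.smul_apply, ← hQdef, ← hdapp m, hdm]
      module
    show br x ((-μ⁻¹) • y + m) = 0
    rw [map_add (br x) ((-μ⁻¹) • y) m, map_smul (br x) (-μ⁻¹) y, hbrxy, RK m hmF x]
    simp
  have hG3 : ∀ i j : Fin n, br (e i) (e j) =
      if (j : ℕ) = 0 then
        (if h : (i : ℕ) + 1 < n then e ⟨(i : ℕ) + 1, h⟩ else 0)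
      else 0 := by
    intro i j
    by_cases hj0 : (j : ℕ) = 0
    · rw [if_pos hj0]
      have hji : j = i0 := Fin.ext hj0
      rw [hji]
      by_cases h : (i : ℕ) + 1 < n
      · rw [dif_pos h]
        show br (E (i : ℕ)) (E 0) = E ((i : ℕ) + 1)
        rw [hE0, ← hEsucc]
      · rw [dif_neg h]
        show br (E (i : ℕ)) (E 0) = 0
        rw [hE0, ← hEsucc, show (i : ℕ) + 1 = n by omega, hEnz]
    · rw [if_neg hj0]
      exact RK (e j) (hEF1 (j : ℕ) (by omega) j.isLt) (e i)
  have hspan2 : Submodule.span ℂ (Set.range (Sum.elim e fun _ : Unit => x)) = ⊤ := by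
    apply le_antisymm le_top
    set S := Submodule.span ℂ (Set.range (Sum.elim e fun _ : Unit => x)) with hSdef
    have heS : Submodule.span ℂ (Set.range e) ≤ S := by
      apply Submodule.span_le.mpr
      rintro v ⟨j, rfl⟩
      exact Submodule.subset_span ⟨Sum.inl j, rfl⟩
    have hxS : x ∈ S := Submodule.subset_span ⟨Sum.inr (), rfl⟩
    have hmS : m ∈ S := heS (hNspanE (FleN 1 hmF))
    have hyS : y ∈ S := by
      have h1 : y = (-μ) • x + μ • m := by
        rw [hxdef]
        match_scalars <;> field_simp <;> ring
      rw [h1]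
      exact add_mem (Submodule.smul_mem _ _ hxS) (Submodule.smul_mem _ _ hmS)
    refine le_trans hspanTop (Submodule.span_le.mpr ?_)
    rintro v ⟨s, rfl⟩
    rcases s with j | u
    · exact heS (hNspanE (FleN 0 (hfF 0 j (Nat.zero_le _)) : f j ∈ N))
    · exact hyS
  refine ⟨e, x, ?_, hspan2, hG3, hG4, hG5, hG6⟩
  exact linearIndependent_of_top_le_span_of_card_eq_finrank (le_of_eq hspan2.symm)
    (by simp [hdim])
end

section
/- Let L be a 5-dimensional complex solvable Leibniz algebra whose nilradical is the 3-dimensional Leibniz algebra with basis {e_1, e_2, e_3} and unique nonzero product [e_2, e_1] = e_3. Then there exists a basis {e_1, e_2, e_3, x_1, x_2} of L whose nonzero products are exactly: [e_2,e_1] = e_3, [e_1,x_1] = e_1, [x_1,e_1] = −e_1, [e_2,x_2] = e_2, [e_3,x_1] = e_3, [e_3,x_2] = e_3. -/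
open Module Submodule

universe u v w

variable {L : Type u} [AddCommGroup L] [Module ℂ L]

section Phase2
variable {L : Type u} [AddCommGroup L] [Module ℂ L]

lemma phase2 (br : Bil L) (hleib : IsLeibniz br) (E0 E1 E2 X1 X2 : L)
    (hind : ∀ a b c : ℂ, a•E0 + b•E1 + c•E2 = 0 → a = 0 ∧ b = 0 ∧ c = 0)
    (t10 : br E1 E0 = E2)
    (t00 : br E0 E0 = 0) (t01 : br E0 E1 = 0) (t02 : br E0 E2 = 0)
    (t11 : br E1 E1 = 0) (t12 : br E1 E2 = 0)
    (t20 : br E2 E0 = 0) (t21 : br E2 E1 = 0) (t22 : br E2 E2 = 0)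
    (A1 : br E0 X1 = E0) (A2 : br E1 X1 = 0) (A3 : br E2 X1 = E2)
    (A4 : br E0 X2 = 0) (A5 : br E1 X2 = E1) (A6 : br E2 X2 = E2)
    (hP1 : ∃ a b c : ℂ, br X1 E0 = a•E0 + b•E1 + c•E2)
    (hP2 : ∃ a b c : ℂ, br X1 E1 = a•E0 + b•E1 + c•E2)
    (hP5 : ∃ a b c : ℂ, br X1 E2 = a•E0 + b•E1 + c•E2)
    (hP3 : ∃ a b c : ℂ, br X2 E0 = a•E0 + b•E1 + c•E2)
    (hP4 : ∃ a b c : ℂ, br X2 E1 = a•E0 + b•E1 + c•E2)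
    (hP6 : ∃ a b c : ℂ, br X2 E2 = a•E0 + b•E1 + c•E2)
    (hn11 : ∃ a b c : ℂ, br X1 X1 = a•E0 + b•E1 + c•E2)
    (hn12 : ∃ a b c : ℂ, br X1 X2 = a•E0 + b•E1 + c•E2)
    (hn21 : ∃ a b c : ℂ, br X2 X1 = a•E0 + b•E1 + c•E2)
    (hn22 : ∃ a b c : ℂ, br X2 X2 = a•E0 + b•E1 + c•E2) :
    ∃ Y1 Y2 : L, (∃ s u : ℂ, Y1 = X1 + s•E1 + u•E2) ∧ (∃ s u : ℂ, Y2 = X2 + s•E1 + u•E2) ∧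
      br E0 Y1 = E0 ∧ br E1 Y1 = 0 ∧ br E2 Y1 = E2 ∧
      br E0 Y2 = 0 ∧ br E1 Y2 = E1 ∧ br E2 Y2 = E2 ∧
      br Y1 E0 = -E0 ∧ br Y1 E1 = 0 ∧ br Y1 E2 = 0 ∧
      br Y2 E0 = 0 ∧ br Y2 E1 = 0 ∧ br Y2 E2 = 0 ∧
      br Y1 Y1 = 0 ∧ br Y1 Y2 = 0 ∧ br Y2 Y1 = 0 ∧ br Y2 Y2 = 0 := by
  obtain ⟨a1, b1, c1, hP1⟩ := hP1
  obtain ⟨a2, b2, c2, hP2⟩ := hP2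
  obtain ⟨a5, b5, c5, hP5⟩ := hP5
  obtain ⟨a3, b3, c3, hP3⟩ := hP3
  obtain ⟨a4, b4, c4, hP4⟩ := hP4
  obtain ⟨a6, b6, c6, hP6⟩ := hP6
  obtain ⟨u1, v1, w1, hn11⟩ := hn11
  obtain ⟨u2, v2, w2, hn12⟩ := hn12
  obtain ⟨u3, v3, w3, hn21⟩ := hn21
  obtain ⟨u4, v4, w4, hn22⟩ := hn22
  -- Step 1 : a1 = -1
  have L1 := hleib E1 X1 E0
  simp only [hP1, hP2, hP5, hP3, hP4, hP6, hn11, hn12, hn21, hn22, map_add, map_smul,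
    LinearMap.add_apply, LinearMap.smul_apply, map_zero, LinearMap.zero_apply,
    t00, t01, t02, t10, t11, t12, t20, t21, t22, A1, A2, A3, A4, A5, A6,
    smul_zero, add_zero, zero_add] at L1
  have ha1 : a1 = -1 := by
    have := (hind 0 0 (1 + a1) (by linear_combination (norm := module) -L1)).2.2
    linear_combination this
  subst ha1
  -- Step 2 : a3 = 0
  have L2 := hleib E1 X2 E0
  simp only [hP1, hP2, hP5, hP3, hP4, hP6, hn11, hn12, hn21, hn22, map_add, map_smul,
    LinearMap.add_apply, LinearMap.smul_apply, map_zero, LinearMap.zero_apply,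
    t00, t01, t02, t10, t11, t12, t20, t21, t22, A1, A2, A3, A4, A5, A6,
    smul_zero, add_zero, zero_add] at L2
  have ha3 : a3 = 0 := (hind 0 0 a3 (by linear_combination (norm := module) -L2)).2.2
  subst ha3
  -- Step 3 : b2 = 0  (from (X1,E0,E1))
  have L3 := hleib X1 E0 E1
  simp only [hP1, hP2, hP5, hP3, hP4, hP6, hn11, hn12, hn21, hn22, map_add, map_smul,
    LinearMap.add_apply, LinearMap.smul_apply, map_zero, LinearMap.zero_apply,
    t00, t01, t02, t10, t11, t12, t20, t21, t22, A1, A2, A3, A4, A5, A6,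
    smul_zero, add_zero, zero_add] at L3
  have hb2 : b2 = 0 := (hind 0 0 b2 (by linear_combination (norm := module) -L3)).2.2
  subst hb2
  -- Step 4 : b4 = 0
  have L4 := hleib X2 E0 E1
  simp only [hP1, hP2, hP5, hP3, hP4, hP6, hn11, hn12, hn21, hn22, map_add, map_smul,
    LinearMap.add_apply, LinearMap.smul_apply, map_zero, LinearMap.zero_apply,
    t00, t01, t02, t10, t11, t12, t20, t21, t22, A1, A2, A3, A4, A5, A6,
    smul_zero, add_zero, zero_add] at L4
  have hb4 : b4 = 0 := (hind 0 0 b4 (by linear_combination (norm := module) -L4)).2.2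
  subst hb4
  -- Step 5 : a5 = b5 = c5 = 0 (from (X1,E1,E0))
  have L5 := hleib X1 E1 E0
  simp only [hP1, hP2, hP5, hP3, hP4, hP6, hn11, hn12, hn21, hn22, map_add, map_smul,
    LinearMap.add_apply, LinearMap.smul_apply, map_zero, LinearMap.zero_apply,
    t00, t01, t02, t10, t11, t12, t20, t21, t22, A1, A2, A3, A4, A5, A6,
    smul_zero, add_zero, zero_add] at L5
  obtain ⟨ha5, hb5, hc5⟩ := hind a5 b5 c5 (by linear_combination (norm := module) -L5)
  subst ha5; subst hb5; subst hc5
  -- Step 6 : a6 = b6 = c6 = 0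
  have L6 := hleib X2 E1 E0
  simp only [hP1, hP2, hP5, hP3, hP4, hP6, hn11, hn12, hn21, hn22, map_add, map_smul,
    LinearMap.add_apply, LinearMap.smul_apply, map_zero, LinearMap.zero_apply,
    t00, t01, t02, t10, t11, t12, t20, t21, t22, A1, A2, A3, A4, A5, A6,
    smul_zero, add_zero, zero_add] at L6
  obtain ⟨ha6, hb6, hc6⟩ := hind a6 b6 c6 (by linear_combination (norm := module) -L6)
  subst ha6; subst hb6; subst hc6
  -- Step 7 : b1 = 0, v1 = 0 (from (X1,E0,X1))
  have L7 := hleib X1 E0 X1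
  simp only [hP1, hP2, hP5, hP3, hP4, hP6, hn11, hn12, hn21, hn22, map_add, map_smul,
    LinearMap.add_apply, LinearMap.smul_apply, map_zero, LinearMap.zero_apply,
    t00, t01, t02, t10, t11, t12, t20, t21, t22, A1, A2, A3, A4, A5, A6,
    smul_zero, add_zero, zero_add] at L7
  obtain ⟨-, hb1, hv1⟩ := hind 0 b1 v1 (by linear_combination (norm := module) -L7)
  subst hb1; subst hv1
  -- Step 8 : v2 = c1 (from (X1,E0,X2))
  have L8 := hleib X1 E0 X2
  simp only [hP1, hP2, hP5, hP3, hP4, hP6, hn11, hn12, hn21, hn22, map_add, map_smul,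
    LinearMap.add_apply, LinearMap.smul_apply, map_zero, LinearMap.zero_apply,
    t00, t01, t02, t10, t11, t12, t20, t21, t22, A1, A2, A3, A4, A5, A6,
    smul_zero, add_zero, zero_add] at L8
  have hv2 : v2 = c1 := by
    have := (hind 0 0 (c1 - v2) (by linear_combination (norm := module) L8)).2.2
    linear_combination -this
  rw [hv2] at hn12
  -- Step 9 : b3 = 0, v3 = 0
  have L9 := hleib X2 E0 X1
  simp only [hP1, hP2, hP5, hP3, hP4, hP6, hn11, hn12, hn21, hn22, map_add, map_smul,
    LinearMap.add_apply, LinearMap.smul_apply, map_zero, LinearMap.zero_apply,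
    t00, t01, t02, t10, t11, t12, t20, t21, t22, A1, A2, A3, A4, A5, A6,
    smul_zero, add_zero, zero_add] at L9
  obtain ⟨-, hb3, hv3⟩ := hind 0 b3 v3 (by linear_combination (norm := module) -L9)
  subst hb3; subst hv3
  -- Step 10 : v4 = c3
  have L10 := hleib X2 E0 X2
  simp only [hP1, hP2, hP5, hP3, hP4, hP6, hn11, hn12, hn21, hn22, map_add, map_smul,
    LinearMap.add_apply, LinearMap.smul_apply, map_zero, LinearMap.zero_apply,
    t00, t01, t02, t10, t11, t12, t20, t21, t22, A1, A2, A3, A4, A5, A6,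
    smul_zero, add_zero, zero_add] at L10
  have hv4 : v4 = c3 := by
    have := (hind 0 0 (c3 - v4) (by linear_combination (norm := module) L10)).2.2
    linear_combination -this
  rw [hv4] at hn22
  -- Step 11 : a2 = 0, c2 = 0
  have L11 := hleib X1 E1 X1
  simp only [hP1, hP2, hP5, hP3, hP4, hP6, hn11, hn12, hn21, hn22, map_add, map_smul,
    LinearMap.add_apply, LinearMap.smul_apply, map_zero, LinearMap.zero_apply,
    t00, t01, t02, t10, t11, t12, t20, t21, t22, A1, A2, A3, A4, A5, A6,
    smul_zero, add_zero, zero_add] at L11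
  obtain ⟨ha2, -, hc2⟩ := hind a2 0 c2 (by linear_combination (norm := module) L11)
  subst ha2; subst hc2
  -- Step 12 : a4 = 0
  have L12 := hleib X2 E1 X2
  simp only [hP1, hP2, hP5, hP3, hP4, hP6, hn11, hn12, hn21, hn22, map_add, map_smul,
    LinearMap.add_apply, LinearMap.smul_apply, map_zero, LinearMap.zero_apply,
    t00, t01, t02, t10, t11, t12, t20, t21, t22, A1, A2, A3, A4, A5, A6,
    smul_zero, add_zero, zero_add] at L12
  have ha4 : a4 = 0 := (hind a4 0 0 (by linear_combination (norm := module) -L12)).1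
  subst ha4
  -- Step 13 : c4 = 0
  have L13 := hleib X2 E1 X1
  simp only [hP1, hP2, hP5, hP3, hP4, hP6, hn11, hn12, hn21, hn22, map_add, map_smul,
    LinearMap.add_apply, LinearMap.smul_apply, map_zero, LinearMap.zero_apply,
    t00, t01, t02, t10, t11, t12, t20, t21, t22, A1, A2, A3, A4, A5, A6,
    smul_zero, add_zero, zero_add] at L13
  have hc4 : c4 = 0 := (hind 0 0 c4 (by linear_combination (norm := module) L13)).2.2
  subst hc4
  -- Step 14-17 : u1 = u2 = u3 = u4 = 0
  have L14 := hleib E1 X1 X1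
  simp only [hP1, hP2, hP5, hP3, hP4, hP6, hn11, hn12, hn21, hn22, map_add, map_smul,
    LinearMap.add_apply, LinearMap.smul_apply, map_zero, LinearMap.zero_apply,
    t00, t01, t02, t10, t11, t12, t20, t21, t22, A1, A2, A3, A4, A5, A6,
    smul_zero, add_zero, zero_add] at L14
  have hu1 : u1 = 0 := (hind 0 0 u1 (by linear_combination (norm := module) -L14)).2.2
  subst hu1
  have L15 := hleib E1 X1 X2
  simp only [hP1, hP2, hP5, hP3, hP4, hP6, hn11, hn12, hn21, hn22, map_add, map_smul,
    LinearMap.add_apply, LinearMap.smul_apply, map_zero, LinearMap.zero_apply,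
    t00, t01, t02, t10, t11, t12, t20, t21, t22, A1, A2, A3, A4, A5, A6,
    smul_zero, add_zero, zero_add] at L15
  have hu2 : u2 = 0 := (hind 0 0 u2 (by linear_combination (norm := module) -L15)).2.2
  subst hu2
  have L16 := hleib E1 X2 X1
  simp only [hP1, hP2, hP5, hP3, hP4, hP6, hn11, hn12, hn21, hn22, map_add, map_smul,
    LinearMap.add_apply, LinearMap.smul_apply, map_zero, LinearMap.zero_apply,
    t00, t01, t02, t10, t11, t12, t20, t21, t22, A1, A2, A3, A4, A5, A6,
    smul_zero, add_zero, zero_add] at L16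
  have hu3 : u3 = 0 := (hind 0 0 u3 (by linear_combination (norm := module) -L16)).2.2
  subst hu3
  have L17 := hleib E1 X2 X2
  simp only [hP1, hP2, hP5, hP3, hP4, hP6, hn11, hn12, hn21, hn22, map_add, map_smul,
    LinearMap.add_apply, LinearMap.smul_apply, map_zero, LinearMap.zero_apply,
    t00, t01, t02, t10, t11, t12, t20, t21, t22, A1, A2, A3, A4, A5, A6,
    smul_zero, add_zero, zero_add] at L17
  have hu4 : u4 = 0 := (hind 0 0 u4 (by linear_combination (norm := module) -L17)).2.2
  subst hu4
  -- Step 18 : w2 = w1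
  have L18 := hleib X1 X2 X1
  simp only [hP1, hP2, hP5, hP3, hP4, hP6, hn11, hn12, hn21, hn22, map_add, map_smul,
    LinearMap.add_apply, LinearMap.smul_apply, map_zero, LinearMap.zero_apply,
    t00, t01, t02, t10, t11, t12, t20, t21, t22, A1, A2, A3, A4, A5, A6,
    smul_zero, add_zero, zero_add] at L18
  have hw2 : w2 = w1 := by
    have := (hind 0 0 (w2 - w1) (by linear_combination (norm := module) L18)).2.2
    linear_combination this
  rw [hw2] at hn12
  -- Step 19 : w4 = w3
  have L19 := hleib X2 X1 X2
  simp only [hP1, hP2, hP5, hP3, hP4, hP6, hn11, hn12, hn21, hn22, map_add, map_smul,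
    LinearMap.add_apply, LinearMap.smul_apply, map_zero, LinearMap.zero_apply,
    t00, t01, t02, t10, t11, t12, t20, t21, t22, A1, A2, A3, A4, A5, A6,
    smul_zero, add_zero, zero_add] at L19
  have hw4 : w4 = w3 := by
    have := (hind 0 0 (w3 - w4) (by linear_combination (norm := module) L19)).2.2
    linear_combination -this
  rw [hw4] at hn22
  -- final basis
  refine ⟨X1 + (-c1)•E1 + (-w1)•E2, X2 + (-c3)•E1 + (-w3)•E2,
    ⟨-c1, -w1, rfl⟩, ⟨-c3, -w3, rfl⟩, ?_, ?_, ?_, ?_, ?_, ?_, ?_, ?_, ?_, ?_, ?_, ?_, ?_, ?_, ?_, ?_⟩ <;>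
  · simp only [hP1, hP2, hP5, hP3, hP4, hP6, hn11, hn12, hn21, hn22, map_add, map_smul, map_neg,
      LinearMap.add_apply, LinearMap.smul_apply, LinearMap.neg_apply,
      map_zero, LinearMap.zero_apply,
      t00, t01, t02, t10, t11, t12, t20, t21, t22, A1, A2, A3, A4, A5, A6,
      smul_zero, add_zero, zero_add]
    try module

end Phase2

/-- The multiplication table of Proposition 5.7 on the basis
`e₁ ↦ v 0`, `e₂ ↦ v 1`, `e₃ ↦ v 2`, `x₁ ↦ v 3`, `x₂ ↦ v 4`:
`[e₂,e₁] = e₃`, `[e₁,x₁] = e₁`, `[x₁,e₁] = -e₁`, `[e₂,x₂] = e₂`, `[e₃,x₁] = e₃`,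
`[e₃,x₂] = e₃`, all other products zero. -/
def table17 {W : Type v} [AddCommGroup W] [Module ℂ W]
    (v : Fin 5 → W) (i j : Fin 5) : W :=
  if i = 1 ∧ j = 0 then v 2
  else if i = 0 ∧ j = 3 then v 0
  else if i = 3 ∧ j = 0 then -v 0
  else if i = 1 ∧ j = 4 then v 1
  else if i = 2 ∧ j = 3 then v 2
  else if i = 2 ∧ j = 4 then v 2
  else 0

set_option maxHeartbeats 1000000 in
/-- Proposition 5.7. A `5`-dimensional complex solvable Leibniz algebra
whose nilradical is the `3`-dimensional algebra with the single product `[e₂,e₁] = e₃`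
admits a basis `{e₁, e₂, e₃, x₁, x₂}` realizing the table of Proposition 5.7. -/
theorem stmt17 {L : Type u} [AddCommGroup L] [Module ℂ L] [FiniteDimensional ℂ L]
    (br3 : Bil (Fin 3 → ℂ))
    (hbr3 : ∀ i j : Fin 3, br3 (Pi.single i 1) (Pi.single j 1) =
      if i = 1 ∧ j = 0 then Pi.single (2 : Fin 3) 1 else 0)
    (br : Bil L) (hleib : IsLeibniz br) (hsolv : IsSolvableSub br (⊤ : Submodule ℂ L))
    (hdim : finrank ℂ L = 5)
    (N : Submodule ℂ L) (hN : IsNilradical br N)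
    (hiso : SubAlgIso br3 ⊤ br N) :
    ∃ v : Fin 5 → L,
      LinearIndependent ℂ v ∧ Submodule.span ℂ (Set.range v) = ⊤ ∧
      ∀ i j : Fin 5, br (v i) (v j) = table17 v i j := by
  obtain ⟨φ, hinj, hrange, hbrφ⟩ := hiso
  set ψ : (Fin 3 → ℂ) →ₗ[ℂ] L := φ ∘ₗ (Submodule.topEquiv.symm : (Fin 3 → ℂ) ≃ₗ[ℂ] _).toLinearMap
    with hψ
  set e : Fin 3 → L := fun i => ψ (Pi.single i 1) with he
  have hψcoe : ⇑ψ = ⇑φ ∘ ⇑(Submodule.topEquiv (R := ℂ) (M := Fin 3 → ℂ)).symm := by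
    rw [hψ]; rfl
  have hψinj : Function.Injective ψ := by
    rw [hψcoe]; exact hinj.comp (Submodule.topEquiv.symm.injective)
  have hψrange : LinearMap.range ψ = N := by
    apply SetLike.ext'
    rw [LinearMap.coe_range, hψcoe, Function.Surjective.range_comp (Submodule.topEquiv.symm.surjective), hrange]
  -- independence
  have he_indep : LinearIndependent ℂ e := by
    have h1 := (Pi.basisFun ℂ (Fin 3)).linearIndependent.map' ψ (LinearMap.ker_eq_bot.2 hψinj)
    convert h1 using 1
    funext i
    simp [he, Pi.basisFun_apply]
    rfl
  have he_span : span ℂ (Set.range e) = N := by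
    have : Set.range e = ψ '' (Set.range (Pi.basisFun ℂ (Fin 3))) := by
      rw [← Set.range_comp]
      apply congrArg
      funext i
      simp [he, Pi.basisFun_apply]
    rw [this, ← Submodule.map_span, Basis.span_eq, Submodule.map_top, hψrange]
  have he_mem : ∀ i, e i ∈ N := fun i => by
    rw [← hψrange]; exact LinearMap.mem_range_self _ _
  -- bracket table
  have he_br : ∀ i j, br (e i) (e j) = if i = 1 ∧ j = 0 then e 2 else 0 := by
    intro i j
    have hz : ((⟨br3 (Pi.single i 1) (Pi.single j 1), Submodule.mem_top⟩ :
        (⊤ : Submodule ℂ (Fin 3 → ℂ))) : Fin 3 → ℂ)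
        = br3 ((⟨Pi.single i 1, Submodule.mem_top⟩ : (⊤ : Submodule ℂ (Fin 3 → ℂ))) : Fin 3 → ℂ)
          ((⟨Pi.single j 1, Submodule.mem_top⟩ : (⊤ : Submodule ℂ (Fin 3 → ℂ))) : Fin 3 → ℂ) := rfl
    have h2 := hbrφ _ _ _ hz
    have he' : ∀ k : Fin 3, e k = φ ⟨Pi.single k 1, Submodule.mem_top⟩ := fun k => rfl
    rw [he' i, he' j, ← h2]
    by_cases hij : i = 1 ∧ j = 0
    · obtain ⟨hi, hj⟩ := hij
      subst hi; subst hj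
      rw [if_pos ⟨rfl, rfl⟩]
      have hzz : (⟨br3 (Pi.single 1 1) (Pi.single 0 1), Submodule.mem_top⟩ :
          (⊤ : Submodule ℂ (Fin 3 → ℂ))) = ⟨Pi.single 2 1, Submodule.mem_top⟩ := by
        apply Subtype.ext
        rw [hbr3]
        simp
      rw [hzz]
      exact (he' 2).symm
    · rw [if_neg hij]
      have : br3 (Pi.single i 1) (Pi.single j 1) = 0 := by rw [hbr3, if_neg hij]
      have hzz : (⟨br3 (Pi.single i 1) (Pi.single j 1), Submodule.mem_top⟩ :
          (⊤ : Submodule ℂ (Fin 3 → ℂ))) = 0 := by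
        apply Subtype.ext; simp [this]
      rw [hzz, map_zero]
  -- independence coefficient extraction
  have hind : ∀ a b c : ℂ, a•(e 0) + b•(e 1) + c•(e 2) = 0 → a = 0 ∧ b = 0 ∧ c = 0 := by
    intro a b c h
    have h2 := Fintype.linearIndependent_iff.1 he_indep ![a, b, c] (by
      rw [Fin.sum_univ_three]
      simpa using h)
    exact ⟨h2 0, h2 1, h2 2⟩
  -- basis of N
  let B : Basis (Fin 3) ℂ ↥N := (Basis.span he_indep).map (LinearEquiv.ofEq _ _ he_span)
  have hB : ∀ i, (B i : L) = e i := by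
    intro i
    simp [B, Basis.span_apply]
  have hNrank : finrank ℂ ↥N = 3 := by rw [finrank_eq_card_basis B, Fintype.card_fin]
  have hrepr : ∀ n ∈ N, ∃ a b c : ℂ, n = a•(e 0) + b•(e 1) + c•(e 2) := by
    intro n hn
    have h1 := B.sum_repr ⟨n, hn⟩
    rw [Fin.sum_univ_three] at h1
    refine ⟨B.repr ⟨n, hn⟩ 0, B.repr ⟨n, hn⟩ 1, B.repr ⟨n, hn⟩ 2, ?_⟩
    have := congrArg (Subtype.val) h1
    simp only [Submodule.coe_add, SetLike.val_smul, hB] at this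
    exact this.symm
  have hcoord : ∀ (m : ↥N) (a b c : ℂ), (m : L) = a•(e 0) + b•(e 1) + c•(e 2) →
      B.repr m 0 = a ∧ B.repr m 1 = b ∧ B.repr m 2 = c := by
    intro m a b c h
    have hm : m = a•(B 0) + b•(B 1) + c•(B 2) := by
      apply Subtype.ext
      simp only [Submodule.coe_add, SetLike.val_smul, hB]
      exact h
    rw [hm]
    simp [Finsupp.single_apply]
  -- table atoms
  have T10 : br (e 1) (e 0) = e 2 := by rw [he_br]; exact if_pos (by decide)
  have T00 : br (e 0) (e 0) = 0 := by rw [he_br]; exact if_neg (by decide)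
  have T01 : br (e 0) (e 1) = 0 := by rw [he_br]; exact if_neg (by decide)
  have T02 : br (e 0) (e 2) = 0 := by rw [he_br]; exact if_neg (by decide)
  have T11 : br (e 1) (e 1) = 0 := by rw [he_br]; exact if_neg (by decide)
  have T12 : br (e 1) (e 2) = 0 := by rw [he_br]; exact if_neg (by decide)
  have T20 : br (e 2) (e 0) = 0 := by rw [he_br]; exact if_neg (by decide)
  have T21 : br (e 2) (e 1) = 0 := by rw [he_br]; exact if_neg (by decide)
  have T22 : br (e 2) (e 2) = 0 := by rw [he_br]; exact if_neg (by decide)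
  -- ideal properties of N
  have NbrL : ∀ (x : L), ∀ n ∈ N, br x n ∈ N := fun x n hn => (hN.1.2 n hn x Submodule.mem_top).2
  have NbrR : ∀ (x : L), ∀ n ∈ N, br n x ∈ N := fun x n hn => (hN.1.2 n hn x Submodule.mem_top).1
  -- brackets with N arguments
  have hE0N : ∀ n ∈ N, br (e 0) n = 0 := by
    intro n hn
    obtain ⟨a, b, c, h⟩ := hrepr n hn
    rw [h]
    simp only [map_add, map_smul, T00, T01, T02, smul_zero, add_zero]
  have hE2N : ∀ n ∈ N, br (e 2) n = 0 := by
    intro n hn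
    obtain ⟨a, b, c, h⟩ := hrepr n hn
    rw [h]
    simp only [map_add, map_smul, T20, T21, T22, smul_zero, add_zero]
  have hNE1 : ∀ n ∈ N, br n (e 1) = 0 := by
    intro n hn
    obtain ⟨a, b, c, h⟩ := hrepr n hn
    rw [h]
    simp only [map_add, map_smul, LinearMap.add_apply, LinearMap.smul_apply,
      T01, T11, T21, smul_zero, add_zero]
  have hNE2 : ∀ n ∈ N, br n (e 2) = 0 := by
    intro n hn
    obtain ⟨a, b, c, h⟩ := hrepr n hn
    rw [h]
    simp only [map_add, map_smul, LinearMap.add_apply, LinearMap.smul_apply,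
      T02, T12, T22, smul_zero, add_zero]
  have hE1N : ∀ n ∈ N, ∃ a : ℂ, br (e 1) n = a • (e 2) := by
    intro n hn
    obtain ⟨a, b, c, h⟩ := hrepr n hn
    refine ⟨a, ?_⟩
    rw [h]
    simp only [map_add, map_smul, T10, T11, T12, smul_zero, add_zero]
  have hNN : ∀ n ∈ N, ∀ m ∈ N, ∃ a : ℂ, br n m = a • (e 2) := by
    intro n hn m hm
    obtain ⟨a, b, c, h⟩ := hrepr n hn
    obtain ⟨a2, h2⟩ := hE1N m hm
    refine ⟨b * a2, ?_⟩
    rw [h]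
    simp only [map_add, map_smul, LinearMap.add_apply, LinearMap.smul_apply,
      hE0N m hm, hE2N m hm, h2, smul_zero, add_zero, zero_add, smul_smul]
  -- the linear functionals
  have hbrE0mem : ∀ x, br (e 0) x ∈ N := fun x => NbrR x (e 0) (he_mem 0)
  have hbrE1mem : ∀ x, br (e 1) x ∈ N := fun x => NbrR x (e 1) (he_mem 1)
  set R0 : L →ₗ[ℂ] ↥N := LinearMap.codRestrict N (br (e 0)) hbrE0mem with hR0
  set R1 : L →ₗ[ℂ] ↥N := LinearMap.codRestrict N (br (e 1)) hbrE1mem with hR1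
  set al : L →ₗ[ℂ] ℂ := (B.coord 0) ∘ₗ R0 with hal_def
  set ga : L →ₗ[ℂ] ℂ := (B.coord 2) ∘ₗ R0 with hga_def
  set be : L →ₗ[ℂ] ℂ := (B.coord 1) ∘ₗ R1 with hbe_def
  set de : L →ₗ[ℂ] ℂ := (B.coord 2) ∘ₗ R1 with hde_def
  have hal : ∀ (x : L) (a b c : ℂ), br (e 0) x = a•(e 0) + b•(e 1) + c•(e 2) →
      al x = a ∧ ga x = c := by
    intro x a b c h
    have h2 := hcoord (R0 x) a b c h
    exact ⟨h2.1, h2.2.2⟩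
  have hbe : ∀ (x : L) (a b c : ℂ), br (e 1) x = a•(e 0) + b•(e 1) + c•(e 2) →
      be x = b ∧ de x = c := by
    intro x a b c h
    have h2 := hcoord (R1 x) a b c h
    exact ⟨h2.2.1, h2.2.2⟩
  -- shape lemmas
  have shape0 : ∀ x : L, br (e 0) x = al x • (e 0) + ga x • (e 2) := by
    intro x
    obtain ⟨a, b, c, h⟩ := hrepr _ (hbrE0mem x)
    have hL := hleib (e 0) (e 0) x
    rw [T00, h] at hL
    simp only [map_add, map_smul, LinearMap.add_apply, LinearMap.smul_apply,
      map_zero, LinearMap.zero_apply, T00, T10, T20, T01, T11, T21, T02, T12, T22,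
      smul_zero, add_zero, zero_add, zero_smul] at hL
    have hb : b = 0 := (hind 0 0 b (by first
      | linear_combination (norm := module) hL
      | linear_combination (norm := module) -hL)).2.2
    obtain ⟨h1, h2⟩ := hal x a b c h
    rw [h, h1, h2, hb]
    module
  have shape1 : ∀ x : L, br (e 1) x = be x • (e 1) + de x • (e 2) := by
    intro x
    obtain ⟨a, b, c, h⟩ := hrepr _ (hbrE1mem x)
    have hL := hleib (e 1) (e 1) x
    rw [T11, h] at hL
    simp only [map_add, map_smul, LinearMap.add_apply, LinearMap.smul_apply,
      map_zero, LinearMap.zero_apply, T00, T10, T20, T01, T11, T21, T02, T12, T22,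
      smul_zero, add_zero, zero_add, zero_smul] at hL
    have ha : a = 0 := (hind 0 0 a (by first
      | linear_combination (norm := module) hL
      | linear_combination (norm := module) -hL)).2.2
    obtain ⟨h1, h2⟩ := hbe x a b c h
    rw [h, h1, h2, ha]
    module
  have shape2 : ∀ x : L, br (e 2) x = (al x + be x) • (e 2) := by
    intro x
    have hL := hleib (e 1) (e 0) x
    rw [T10, shape0 x, shape1 x] at hL
    simp only [map_add, map_smul, LinearMap.add_apply, LinearMap.smul_apply,
      T00, T10, T20, T01, T11, T21, T02, T12, T22, smul_zero, add_zero, zero_add] at hL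
    first
      | linear_combination (norm := module) hL
      | linear_combination (norm := module) -hL
  -- vanishing on N
  have halN : ∀ n ∈ N, al n = 0 ∧ be n = 0 := by
    intro n hn
    obtain ⟨a, h1⟩ := hE1N n hn
    exact ⟨(hal n 0 0 0 (by rw [hE0N n hn]; module)).1,
      (hbe n 0 0 a (by rw [h1]; module)).1⟩
  -- functionals vanish on brackets
  have habr : ∀ y z : L, al (br y z) = 0 ∧ be (br y z) = 0 := by
    intro y z
    constructor
    · have h := hleib (e 0) y z
      rw [shape0 y, shape0 z] at h
      simp only [map_add, map_smul, LinearMap.add_apply, LinearMap.smul_apply] at h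
      rw [shape0 z, shape2 z, shape0 y, shape2 y] at h
      have hkey : br (e 0) (br y z) = (0:ℂ)•(e 0) + (0:ℂ)•(e 1) +
          (al y * ga z + ga y * (al z + be z) - al z * ga y - ga z * (al y + be y))•(e 2) := by
        first
        | linear_combination (norm := module) h
        | linear_combination (norm := module) -h
      exact (hal _ _ _ _ hkey).1
    · have h := hleib (e 1) y z
      rw [shape1 y, shape1 z] at h
      simp only [map_add, map_smul, LinearMap.add_apply, LinearMap.smul_apply] at h
      rw [shape1 z, shape2 z, shape1 y, shape2 y] at h
      have hkey : br (e 1) (br y z) = (0:ℂ)•(e 0) + (0:ℂ)•(e 1) +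
          (be y * de z + de y * (al z + be z) - be z * de y - de z * (al y + be y))•(e 2) := by
        first
        | linear_combination (norm := module) h
        | linear_combination (norm := module) -h
      exact (hbe _ _ _ _ hkey).1
  -- bspan helpers
  have bspan_le : ∀ (A Bs C : Submodule ℂ L), (∀ a ∈ A, ∀ b ∈ Bs, br a b ∈ C) →
      bspan br A Bs ≤ C := by
    intro A Bs C h
    apply Submodule.span_le.2
    rintro z ⟨x, hx, y, hy, rfl⟩
    exact h x hx y hy
  have bspan_mono : ∀ (A A' Bs : Submodule ℂ L), A ≤ A' → bspan br A Bs ≤ bspan br A' Bs := by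
    intro A A' Bs h
    apply Submodule.span_mono
    rintro z ⟨x, hx, y, hy, rfl⟩
    exact ⟨x, h hx, y, hy, rfl⟩
  have bspan_gen : ∀ (A Bs : Submodule ℂ L) (a : L), a ∈ A → ∀ b ∈ Bs, br a b ∈ bspan br A Bs := by
    intro A Bs a ha b hb
    exact Submodule.subset_span ⟨a, ha, b, hb, rfl⟩
  -- V = L² ⊔ N is proper
  have hVtop : bspan br ⊤ ⊤ ⊔ N ≠ ⊤ := by
    intro hV
    obtain ⟨m, hm⟩ := hsolv
    have key : ∀ k, derS br ⊤ k ⊔ N = ⊤ := by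
      intro k
      induction k with
      | zero => simp [derS]
      | succ k ih =>
        apply le_antisymm le_top
        conv_lhs => rw [← hV]
        apply sup_le ?_ le_sup_right
        apply bspan_le
        intro a _ b _
        have ha : a ∈ derS br ⊤ k ⊔ N := by rw [ih]; trivial
        have hb : b ∈ derS br ⊤ k ⊔ N := by rw [ih]; trivial
        obtain ⟨d, hd, n, hn, rfl⟩ := mem_sup.1 ha
        obtain ⟨d', hd', n', hn', rfl⟩ := mem_sup.1 hb
        have hexp : br (d + n) (d' + n') = br d d' + (br d n' + (br n d' + br n n')) := by
          simp only [map_add, LinearMap.add_apply]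
          abel
        rw [hexp]
        refine add_mem (Submodule.mem_sup_left ?_) (Submodule.mem_sup_right ?_)
        · have : derS br ⊤ (k+1) = bspan br (derS br ⊤ k) (derS br ⊤ k) := rfl
          rw [this]
          exact bspan_gen _ _ d hd d' hd'
        · exact add_mem (NbrL d n' hn') (add_mem (NbrR d' n hn) (NbrL n n' hn'))
    have hfin := key m
    rw [hm, bot_sup_eq] at hfin
    rw [hfin, finrank_top, hdim] at hNrank
    norm_num at hNrank
  -- contradiction gadget
  have nilpC : ∀ x : L, x ∉ N → al x = 0 → be x = 0 →
      (∀ y : L, br y x ∈ N ⊔ (ℂ ∙ x)) → (∀ y : L, br x y ∈ N ⊔ (ℂ ∙ x)) → False := by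
    intro x hxN hax hbx hyx hxy
    have hxxN : br x x ∈ N := by
      obtain ⟨n, hn, w, hw, hsum⟩ := mem_sup.1 (hxy x)
      obtain ⟨lam, rfl⟩ := mem_span_singleton.1 hw
      have h0 : br x (br x x) = 0 := by
        have h := hleib x x x
        exact (left_eq_add.1 h)
      rw [← hsum] at h0
      simp only [map_add, map_smul] at h0
      rw [← hsum] at h0
      -- h0 : br x n + lam • (n + lam • x) = 0
      by_cases hlam : lam = 0
      · rw [← hsum, hlam]
        simpa using hn
      · exfalso
        apply hxN
        have hmem : (lam*lam)•x ∈ N := by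
          have hx2 : (lam*lam)•x = -(br x n) - lam•n := by
            first
            | linear_combination (norm := module) h0
            | linear_combination (norm := module) -h0
          rw [hx2]
          exact sub_mem (neg_mem (NbrL x n hn)) (smul_mem _ _ hn)
        have h2 := smul_mem N ((lam*lam)⁻¹) hmem
        rw [smul_smul, inv_mul_cancel₀ (by exact mul_ne_zero hlam hlam), one_smul] at h2
        exact h2
    set U : Submodule ℂ L := N ⊔ (ℂ ∙ x) with hUdef
    have hUideal : IsIdealIn br ⊤ U := by
      refine ⟨le_top, ?_⟩
      intro u hu y _
      obtain ⟨n, hn, w, hw, rfl⟩ := mem_sup.1 hu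
      obtain ⟨lam, rfl⟩ := mem_span_singleton.1 hw
      constructor
      · have hexp : br (n + lam•x) y = br n y + lam•(br x y) := by
          simp only [map_add, map_smul, LinearMap.add_apply, LinearMap.smul_apply]
        rw [hexp]
        exact add_mem (Submodule.mem_sup_left (NbrR y n hn)) (smul_mem _ _ (hxy y))
      · have hexp : br y (n + lam•x) = br y n + lam•(br y x) := by
          simp only [map_add, map_smul]
        rw [hexp]
        exact add_mem (Submodule.mem_sup_left (NbrL y n hn)) (smul_mem _ _ (hyx y))
    have hbrNx : ∀ n ∈ N, br n x ∈ (ℂ ∙ e 2) := by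
      intro n hn
      obtain ⟨a, b, c, h⟩ := hrepr n hn
      refine mem_span_singleton.2 ⟨a * ga x + b * de x, ?_⟩
      rw [h]
      simp only [map_add, map_smul, LinearMap.add_apply, LinearMap.smul_apply]
      rw [shape0 x, shape1 x, shape2 x, hax, hbx]
      module
    have hUU : ∀ u ∈ U, ∀ u' ∈ U, br u u' ∈ N := by
      intro u hu u' hu'
      obtain ⟨n, hn, w, hw, rfl⟩ := mem_sup.1 hu
      obtain ⟨lam, rfl⟩ := mem_span_singleton.1 hw
      obtain ⟨n', hn', w', hw', rfl⟩ := mem_sup.1 hu'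
      obtain ⟨lam', rfl⟩ := mem_span_singleton.1 hw'
      have hexp : br (n + lam•x) (n' + lam'•x) =
          br n n' + lam'•(br n x) + lam•(br x n') + (lam*lam')•(br x x) := by
        simp only [map_add, map_smul, LinearMap.add_apply, LinearMap.smul_apply, smul_smul]
        module
      rw [hexp]
      exact add_mem (add_mem (add_mem (NbrL n n' hn') (smul_mem _ _ (NbrR x n hn)))
        (smul_mem _ _ (NbrL x n' hn'))) (smul_mem _ _ hxxN)
    have hNU : ∀ n ∈ N, ∀ u ∈ U, br n u ∈ (ℂ ∙ e 2) := by
      intro n hn u hu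
      obtain ⟨n', hn', w', hw', rfl⟩ := mem_sup.1 hu
      obtain ⟨lam', rfl⟩ := mem_span_singleton.1 hw'
      have hexp : br n (n' + lam'•x) = br n n' + lam'•(br n x) := by
        simp only [map_add, map_smul]
      rw [hexp]
      obtain ⟨a, h2⟩ := hNN n hn n' hn'
      refine add_mem ?_ (smul_mem _ _ (hbrNx n hn))
      exact mem_span_singleton.2 ⟨a, h2.symm⟩
    have hE2U : ∀ z ∈ (ℂ ∙ e 2), ∀ u ∈ U, br z u = 0 := by
      intro z hz u hu
      obtain ⟨lam, rfl⟩ := mem_span_singleton.1 hz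
      obtain ⟨n', hn', w', hw', rfl⟩ := mem_sup.1 hu
      obtain ⟨lam', rfl⟩ := mem_span_singleton.1 hw'
      have hexp : br (lam • e 2) (n' + lam'•x) = lam•(br (e 2) n') + (lam*lam')•(br (e 2) x) := by
        simp only [map_add, map_smul, LinearMap.add_apply, LinearMap.smul_apply, smul_smul]
        module
      rw [hexp, hE2N n' hn', shape2 x, hax, hbx]
      simp
    have hnilU : IsNilpotentSub br U := by
      refine ⟨3, le_bot_iff.1 ?_⟩
      have e1le : lcs br U 1 ≤ N := bspan_le _ _ _ hUU
      have e2le : lcs br U 2 ≤ (ℂ ∙ e 2) := by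
        have h1 : lcs br U 2 = bspan br (lcs br U 1) U := rfl
        rw [h1]
        exact le_trans (bspan_mono _ _ _ e1le) (bspan_le _ _ _ hNU)
      have e3le : lcs br U 3 ≤ ⊥ := by
        have h1 : lcs br U 3 = bspan br (lcs br U 2) U := rfl
        rw [h1]
        refine le_trans (bspan_mono _ _ _ e2le) (bspan_le _ _ _ ?_)
        intro a ha b hb
        rw [hE2U a ha b hb]
        exact zero_mem _
      exact e3le
    have hUN := hN.2.2 U hUideal hnilU
    exact hxN (hUN (Submodule.mem_sup_right (mem_span_singleton_self x)))
  -- L² ⊆ N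
  have hL2N : ∀ y z : L, br y z ∈ N := by
    have hVN : bspan br ⊤ ⊤ ⊔ N ≤ N := by
      by_contra hc
      obtain ⟨x, hxV, hxN⟩ := SetLike.not_le_iff_exists.1 hc
      have hNV : N ≤ bspan br ⊤ ⊤ ⊔ N := le_sup_right
      have hVlt : bspan br ⊤ ⊤ ⊔ N < ⊤ := lt_top_iff_ne_top.2 hVtop
      have h5 : finrank ℂ ↥(bspan br ⊤ ⊤ ⊔ N) < 5 := by
        have := Submodule.finrank_lt (K := ℂ) (V := L) hVlt.ne
        omega
      have hNlt : N < N ⊔ (ℂ ∙ x) := by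
        refine lt_of_le_of_ne le_sup_left (fun h => hxN ?_)
        rw [h]
        exact Submodule.mem_sup_right (mem_span_singleton_self x)
      have h4 : 3 < finrank ℂ ↥(N ⊔ (ℂ ∙ x)) := by
        have := Submodule.finrank_lt_finrank_of_lt hNlt
        omega
      have hNsub : N ⊔ (ℂ ∙ x) ≤ bspan br ⊤ ⊤ ⊔ N :=
        sup_le hNV ((Submodule.span_singleton_le_iff_mem _ _).2 hxV)
      have hVeq : N ⊔ (ℂ ∙ x) = bspan br ⊤ ⊤ ⊔ N :=
        Submodule.eq_of_le_of_finrank_le hNsub (by omega)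
      have hkerV : ∀ v ∈ bspan br ⊤ ⊤ ⊔ N, al v = 0 ∧ be v = 0 := by
        intro v hv
        have hle : bspan br ⊤ ⊤ ⊔ N ≤ LinearMap.ker al ⊓ LinearMap.ker be := by
          apply sup_le
          · apply bspan_le
            intro a _ b _
            exact Submodule.mem_inf.2 ⟨LinearMap.mem_ker.2 (habr a b).1,
              LinearMap.mem_ker.2 (habr a b).2⟩
          · intro n hn
            exact Submodule.mem_inf.2 ⟨LinearMap.mem_ker.2 (halN n hn).1,
              LinearMap.mem_ker.2 (halN n hn).2⟩
        have h2 := Submodule.mem_inf.1 (hle hv)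
        exact ⟨LinearMap.mem_ker.1 h2.1, LinearMap.mem_ker.1 h2.2⟩
      refine nilpC x hxN (hkerV x hxV).1 (hkerV x hxV).2 ?_ ?_
      · intro y
        rw [hVeq]
        exact Submodule.mem_sup_left (bspan_gen ⊤ ⊤ y trivial x trivial)
      · intro y
        rw [hVeq]
        exact Submodule.mem_sup_left (bspan_gen ⊤ ⊤ x trivial y trivial)
    intro y z
    exact hVN (Submodule.mem_sup_left (bspan_gen ⊤ ⊤ y trivial z trivial))
  -- kernel of (al, be) is N
  have hkerN : ∀ x : L, al x = 0 → be x = 0 → x ∈ N := by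
    intro x ha hb
    by_contra hxN
    exact nilpC x hxN ha hb (fun y => Submodule.mem_sup_left (hL2N y x))
      (fun y => Submodule.mem_sup_left (hL2N x y))
  -- surjectivity of (al, be)
  have hsurj : ∀ p : ℂ × ℂ, ∃ y : L, al y = p.1 ∧ be y = p.2 := by
    have hth : LinearMap.range (al.prod be) = ⊤ := by
      by_contra hc
      have hrk := LinearMap.finrank_range_add_finrank_ker (al.prod be)
      have hker_le : LinearMap.ker (al.prod be) ≤ N := by
        intro x hx
        have h2 := LinearMap.mem_ker.1 hx
        rw [LinearMap.prod_apply] at h2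
        have h3 : al x = 0 := congrArg Prod.fst h2
        have h4 : be x = 0 := congrArg Prod.snd h2
        exact hkerN x h3 h4
      have h1 : finrank ℂ ↥(LinearMap.ker (al.prod be)) ≤ 3 := by
        have := Submodule.finrank_mono hker_le
        omega
      have h2 : finrank ℂ ↥(LinearMap.range (al.prod be)) < 2 := by
        have hlt : LinearMap.range (al.prod be) < ⊤ := lt_top_iff_ne_top.2 hc
        have := Submodule.finrank_lt (K := ℂ) (V := ℂ × ℂ) hlt.ne
        simp only [finrank_prod, finrank_self] at this
        omega
      rw [hdim] at hrk
      omega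
    intro p
    obtain ⟨y, hy⟩ := LinearMap.range_eq_top.1 hth p
    rw [LinearMap.prod_apply] at hy
    exact ⟨y, congrArg Prod.fst hy, congrArg Prod.snd hy⟩
  -- choose y1 y2
  obtain ⟨y1, hy1a, hy1b⟩ := hsurj (1, 0)
  obtain ⟨y2, hy2a, hy2b⟩ := hsurj (0, 1)
  simp only at hy1a hy1b hy2a hy2b
  -- values of functionals on basis of N
  have hga0 : ga (e 0) = 0 := (hal (e 0) 0 0 0 (by rw [T00]; module)).2
  have hde0 : de (e 0) = 1 := (hbe (e 0) 0 0 1 (by rw [T10]; module)).2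
  have hga2 : ga (e 2) = 0 := (hal (e 2) 0 0 0 (by rw [T02]; module)).2
  have hde2 : de (e 2) = 0 := (hbe (e 2) 0 0 0 (by rw [T12]; module)).2
  have hga1 : ga (e 1) = 0 := (hal (e 1) 0 0 0 (by rw [T01]; module)).2
  have hde1 : de (e 1) = 0 := (hbe (e 1) 0 0 0 (by rw [T11]; module)).2
  set X1 : L := y1 - (de y1)•(e 0) with hX1def
  set X2 : L := y2 - (de y2)•(e 0) with hX2def
  have halX1 : al X1 = 1 := by
    rw [hX1def, map_sub, map_smul, (halN _ (he_mem 0)).1, hy1a]; simp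
  have hbeX1 : be X1 = 0 := by
    rw [hX1def, map_sub, map_smul, (halN _ (he_mem 0)).2, hy1b]; simp
  have hdeX1 : de X1 = 0 := by
    rw [hX1def, map_sub, map_smul, hde0]; simp
  have halX2 : al X2 = 0 := by
    rw [hX2def, map_sub, map_smul, (halN _ (he_mem 0)).1, hy2a]; simp
  have hbeX2 : be X2 = 1 := by
    rw [hX2def, map_sub, map_smul, (halN _ (he_mem 0)).2, hy2b]; simp
  have hdeX2 : de X2 = 0 := by
    rw [hX2def, map_sub, map_smul, hde0]; simp
  -- c1 = ga X1 = 0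
  have hc1 : ga X1 = 0 := by
    have h := hleib (e 0) X1 X2
    rw [hE0N _ (hL2N X1 X2)] at h
    rw [shape0 X1, shape0 X2] at h
    simp only [map_add, map_smul, LinearMap.add_apply, LinearMap.smul_apply, add_zero] at h
    rw [shape0 X2, shape2 X2, shape0 X1, shape2 X1, halX1, halX2, hbeX2, hbeX1] at h
    have hkey : (0:ℂ)•(e 0) + (0:ℂ)•(e 1) + (ga X1)•(e 2) = 0 := by
      first
      | linear_combination (norm := module) h
      | linear_combination (norm := module) -h
    exact (hind 0 0 _ hkey).2.2
  set E0 : L := e 0 - (ga X2)•(e 2) with hE0def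
  have hE0mem : E0 ∈ N := sub_mem (he_mem 0) (smul_mem _ _ (he_mem 2))
  -- table in new basis
  have tE10 : br (e 1) E0 = e 2 := by
    rw [hE0def, map_sub, map_smul, T10, T12]; module
  have tE00 : br E0 E0 = 0 := by
    rw [hE0def]
    simp only [map_sub, map_smul, LinearMap.sub_apply, LinearMap.smul_apply,
      T00, T02, T20, T22, smul_zero, sub_zero]
    try module
  have tE01 : br E0 (e 1) = 0 := by
    rw [hE0def]
    simp only [map_sub, map_smul, LinearMap.sub_apply, LinearMap.smul_apply, T01, T21]
    module
  have tE02 : br E0 (e 2) = 0 := by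
    rw [hE0def]
    simp only [map_sub, map_smul, LinearMap.sub_apply, LinearMap.smul_apply, T02, T22]
    module
  have tE20 : br (e 2) E0 = 0 := by
    rw [hE0def, map_sub, map_smul, T20, T22]; module
  -- right action facts
  have A1 : br E0 X1 = E0 := by
    rw [hE0def]
    simp only [map_sub, map_smul, LinearMap.sub_apply, LinearMap.smul_apply]
    rw [shape0 X1, shape2 X1, halX1, hbeX1, hc1]
    module
  have A2 : br (e 1) X1 = 0 := by
    rw [shape1 X1, hbeX1, hdeX1]; module
  have A3 : br (e 2) X1 = e 2 := by
    rw [shape2 X1, halX1, hbeX1]; module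
  have A4 : br E0 X2 = 0 := by
    rw [hE0def]
    simp only [map_sub, map_smul, LinearMap.sub_apply, LinearMap.smul_apply]
    rw [shape0 X2, shape2 X2, halX2, hbeX2]
    module
  have A5 : br (e 1) X2 = e 1 := by
    rw [shape1 X2, hbeX2, hdeX2]; module
  have A6 : br (e 2) X2 = e 2 := by
    rw [shape2 X2, halX2, hbeX2]; module
  -- independence in new basis
  have hindE : ∀ a b c : ℂ, a•E0 + b•(e 1) + c•(e 2) = 0 → a = 0 ∧ b = 0 ∧ c = 0 := by
    intro a b c h
    rw [hE0def] at h
    obtain ⟨h1, h2, h3⟩ := hind a b (c - a * ga X2) (by linear_combination (norm := module) h)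
    exact ⟨h1, h2, by linear_combination h3 + ga X2 * h1⟩
  have memE : ∀ z ∈ N, ∃ a b c : ℂ, z = a•E0 + b•(e 1) + c•(e 2) := by
    intro z hz
    obtain ⟨a, b, c, h⟩ := hrepr z hz
    refine ⟨a, b, c + a * ga X2, ?_⟩
    rw [h, hE0def]
    module
  obtain ⟨Y1, Y2, ⟨s1, u1, hY1⟩, ⟨s2, u2, hY2⟩, G1, G2, G3, G4, G5, G6, G7, G8, G9,
      G10, G11, G12, G13, G14, G15, G16⟩ :=
    phase2 br hleib E0 (e 1) (e 2) X1 X2 hindE tE10 tE00 tE01 tE02 T11 T12 tE20 T21 T22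
      A1 A2 A3 A4 A5 A6
      (memE _ (NbrL X1 E0 hE0mem)) (memE _ (NbrL X1 (e 1) (he_mem 1)))
      (memE _ (NbrL X1 (e 2) (he_mem 2))) (memE _ (NbrL X2 E0 hE0mem))
      (memE _ (NbrL X2 (e 1) (he_mem 1))) (memE _ (NbrL X2 (e 2) (he_mem 2)))
      (memE _ (hL2N X1 X1)) (memE _ (hL2N X1 X2)) (memE _ (hL2N X2 X1)) (memE _ (hL2N X2 X2))
  -- functional values on Y's
  have halY1 : al Y1 = 1 := by
    rw [hY1]
    simp only [map_add, map_smul, smul_eq_mul]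
    rw [halX1, (halN _ (he_mem 1)).1, (halN _ (he_mem 2)).1]
    ring
  have hbeY1 : be Y1 = 0 := by
    rw [hY1]
    simp only [map_add, map_smul, smul_eq_mul]
    rw [hbeX1, (halN _ (he_mem 1)).2, (halN _ (he_mem 2)).2]
    ring
  have halY2 : al Y2 = 0 := by
    rw [hY2]
    simp only [map_add, map_smul, smul_eq_mul]
    rw [halX2, (halN _ (he_mem 1)).1, (halN _ (he_mem 2)).1]
    ring
  have hbeY2 : be Y2 = 1 := by
    rw [hY2]
    simp only [map_add, map_smul, smul_eq_mul]
    rw [hbeX2, (halN _ (he_mem 1)).2, (halN _ (he_mem 2)).2]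
    ring
  have hal0 : al E0 = 0 := (halN _ hE0mem).1
  have hbe0 : be E0 = 0 := (halN _ hE0mem).2
  have hli : LinearIndependent ℂ ![E0, e 1, e 2, Y1, Y2] := by
    rw [Fintype.linearIndependent_iff]
    intro g hg
    rw [Fin.sum_univ_five] at hg
    simp only [Matrix.cons_val_zero, Matrix.cons_val_one, Matrix.head_cons,
      Matrix.cons_val_two, Matrix.tail_cons, Matrix.cons_val_three, Matrix.cons_val_four] at hg
    have h3 : g 3 = 0 := by
      have h := congrArg al hg
      simp only [map_add, map_smul, map_zero, smul_eq_mul] at h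
      rw [hal0, (halN _ (he_mem 1)).1, (halN _ (he_mem 2)).1, halY1, halY2] at h
      linear_combination h
    have h4 : g 4 = 0 := by
      have h := congrArg be hg
      simp only [map_add, map_smul, map_zero, smul_eq_mul] at h
      rw [hbe0, (halN _ (he_mem 1)).2, (halN _ (he_mem 2)).2, hbeY1, hbeY2] at h
      linear_combination h
    rw [h3, h4] at hg
    obtain ⟨h0, h1, h2⟩ := hindE (g 0) (g 1) (g 2) (by linear_combination (norm := module) hg)
    intro i
    fin_cases i
    · exact h0
    · exact h1
    · exact h2
    · exact h3
    · exact h4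
  refine ⟨![E0, e 1, e 2, Y1, Y2], hli,
    hli.span_eq_top_of_card_eq_finrank (by rw [Fintype.card_fin, hdim]), ?_⟩
  clear_value B R0 R1 al ga be de X1 X2 E0 ψ e
  intro i j
  fin_cases i <;> fin_cases j <;>
    simp only [table17, Matrix.cons_val_zero, Matrix.cons_val_one, Matrix.head_cons,
      Matrix.cons_val_two, Matrix.tail_cons, Matrix.cons_val_three, Matrix.cons_val_four,
      Fin.isValue] <;>
    norm_num <;>
    first
    | exact tE00 | exact tE01 | exact tE02 | exact tE10 | exact tE20
    | exact T11 | exact T12 | exact T21 | exact T22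
    | exact G1 | exact G2 | exact G3 | exact G4 | exact G5 | exact G6 | exact G7 | exact G8
    | exact G9 | exact G10 | exact G11 | exact G12 | exact G13 | exact G14 | exact G15
    | exact G16
end
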